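/- arXiv:2605.20750 — 8 statements merged into one kernel-verified Lean document; each statement's English description precedes it below -/
import Mathlib

section
/- Let K and K' be nonempty compact convex sets. Suppose there exists a bijection α : ∂_e K → ∂_e K' such that: for every f ∈ A_c(K) there exists F ∈ A_c(K') with F(ψ') = 1 / f(α^{-1}(ψ')) for all ψ' ∈ ∂_e K', and for every g ∈ A_c(K') there exists G ∈ A_c(K) with G(ψ) = 1 / g(α(ψ)) for all ψ ∈ ∂_e K. Then there exists a gauge-reversing bijection Φ : A_c(K) → A_c(K') with Φ(1_K) = 1_{K'} satisfying Φ(f)(ψ') = 1 / f(α^{-1}(ψ')) for every f ∈ A_c(K) and every ψ' ∈ ∂_e K'. -/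
open Set

noncomputable section

/-- `f : K → ℝ` is affine on `K`. -/
def IsAffineOn {E : Type*} [AddCommGroup E] [Module ℝ E] (K : Set E) (f : K → ℝ) : Prop :=
  ∀ (x y : K) (t : ℝ), 0 ≤ t → t ≤ 1 →
    ∀ h : t • (x : E) + (1 - t) • (y : E) ∈ K,
      f ⟨t • (x : E) + (1 - t) • (y : E), h⟩ = t * f x + (1 - t) * f y

/-- Membership in `A_c(K)`: continuous, affine and strictly positive functions on `K`. -/

lemma isAffineOn_comb {E : Type*} [AddCommGroup E] [Module ℝ E] {K : Set E}
    {f g : K → ℝ} (hf : IsAffineOn K f) (hg : IsAffineOn K g) (a b : ℝ) :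
    IsAffineOn K (fun x => a * f x + b * g x) := by
  intro x y t ht ht1 h
  simp only [hf x y t ht ht1 h, hg x y t ht ht1 h]
  ring

lemma nonneg_of_extreme {E : Type*} [AddCommGroup E] [Module ℝ E] [TopologicalSpace E]
    [IsTopologicalAddGroup E] [ContinuousSMul ℝ E] [T2Space E] [LocallyConvexSpace ℝ E]
    {K : Set E} (hKcp : IsCompact K) (hKcv : Convex ℝ K)
    {h : K → ℝ} (hc : Continuous h) (ha : IsAffineOn K h)
    (hpos : ∀ ψ : K.extremePoints ℝ, 0 ≤ h ⟨(ψ : E), extremePoints_subset ψ.2⟩) :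
    ∀ x : K, 0 ≤ h x := by
  have : CompactSpace K := isCompact_iff_compactSpace.mp hKcp
  set S : Set E := Subtype.val '' {x : K | 0 ≤ h x} with hS
  have hSconv : Convex ℝ S := by
    rintro a ⟨⟨a, haK⟩, ha0, rfl⟩ b ⟨⟨b, hbK⟩, hb0, rfl⟩ t s ht hs hts
    have hs' : s = 1 - t := by linarith
    subst hs'
    have hmem : t • a + (1 - t) • b ∈ K := hKcv haK hbK ht hs hts
    refine ⟨⟨_, hmem⟩, ?_, rfl⟩
    show 0 ≤ h ⟨t • a + (1 - t) • b, hmem⟩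
    rw [ha ⟨a, haK⟩ ⟨b, hbK⟩ t ht (by linarith) hmem]
    exact add_nonneg (mul_nonneg ht ha0) (mul_nonneg hs hb0)
  have hSclosed : IsClosed S := by
    have h1 : IsClosed {x : K | 0 ≤ h x} := isClosed_le continuous_const hc
    exact (h1.isCompact.image continuous_subtype_val).isClosed
  have hKS : K ⊆ S := by
    rw [← closure_convexHull_extremePoints hKcp hKcv]
    refine closure_minimal (convexHull_min ?_ hSconv) hSclosed
    rintro x hx
    exact ⟨⟨x, extremePoints_subset hx⟩, hpos ⟨x, hx⟩, rfl⟩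
  intro x
  obtain ⟨y, hy, heq⟩ := hKS x.2
  have : y = x := Subtype.ext heq
  rwa [← this]

def MemAc {E : Type*} [AddCommGroup E] [Module ℝ E] [TopologicalSpace E]
    (K : Set E) (f : K → ℝ) : Prop :=
  Continuous f ∧ IsAffineOn K f ∧ ∀ x : K, 0 < f x


lemma eq_of_extreme {E : Type*} [AddCommGroup E] [Module ℝ E] [TopologicalSpace E]
    [IsTopologicalAddGroup E] [ContinuousSMul ℝ E] [T2Space E] [LocallyConvexSpace ℝ E]
    {K : Set E} (hKcp : IsCompact K) (hKcv : Convex ℝ K)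
    {f g : K → ℝ} (hf : MemAc K f) (hg : MemAc K g)
    (heq : ∀ ψ : K.extremePoints ℝ,
      f ⟨(ψ : E), extremePoints_subset ψ.2⟩ = g ⟨(ψ : E), extremePoints_subset ψ.2⟩) :
    f = g := by
  have h1 : ∀ x : K, 0 ≤ f x - g x := by
    refine nonneg_of_extreme hKcp hKcv (hf.1.sub hg.1) ?_ (fun ψ => by rw [heq ψ]; simp)
    have := isAffineOn_comb hf.2.1 hg.2.1 1 (-1)
    simpa [sub_eq_add_neg] using this
  have h2 : ∀ x : K, 0 ≤ g x - f x := by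
    refine nonneg_of_extreme hKcp hKcv (hg.1.sub hf.1) ?_ (fun ψ => by rw [heq ψ]; simp)
    have := isAffineOn_comb hg.2.1 hf.2.1 1 (-1)
    simpa [sub_eq_add_neg] using this
  funext x
  have := h1 x; have := h2 x; linarith

/-- The gauge `m(f,g) = sup {λ > 0 : λ·g ≤ f}`. -/
def gaugem {E : Type*} [AddCommGroup E] [Module ℝ E] {K : Set E} (f g : K → ℝ) : ℝ :=
  sSup {l : ℝ | 0 < l ∧ ∀ x : K, l * g x ≤ f x}
theorem statement1
    {E E' : Type*}
    [AddCommGroup E] [Module ℝ E] [TopologicalSpace E] [IsTopologicalAddGroup E]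
    [ContinuousSMul ℝ E] [T2Space E] [LocallyConvexSpace ℝ E]
    [AddCommGroup E'] [Module ℝ E'] [TopologicalSpace E'] [IsTopologicalAddGroup E']
    [ContinuousSMul ℝ E'] [T2Space E'] [LocallyConvexSpace ℝ E']
    (K : Set E) (K' : Set E')
    (hKne : K.Nonempty) (hKcp : IsCompact K) (hKcv : Convex ℝ K)
    (hK'ne : K'.Nonempty) (hK'cp : IsCompact K') (hK'cv : Convex ℝ K')
    (α : (K.extremePoints ℝ) ≃ (K'.extremePoints ℝ))
    (hext : ∀ f : {f : K → ℝ // MemAc K f}, ∃ F : {F : K' → ℝ // MemAc K' F},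
      ∀ ψ' : K'.extremePoints ℝ,
        F.1 ⟨(ψ' : E'), extremePoints_subset ψ'.2⟩
          = 1 / f.1 ⟨(α.symm ψ' : E), extremePoints_subset (α.symm ψ').2⟩)
    (hext' : ∀ g : {g : K' → ℝ // MemAc K' g}, ∃ G : {G : K → ℝ // MemAc K G},
      ∀ ψ : K.extremePoints ℝ,
        G.1 ⟨(ψ : E), extremePoints_subset ψ.2⟩
          = 1 / g.1 ⟨(α ψ : E'), extremePoints_subset (α ψ).2⟩) :
    ∃ Φ : {f : K → ℝ // MemAc K f} → {g : K' → ℝ // MemAc K' g},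
      Function.Bijective Φ ∧
      (∀ f g : {f : K → ℝ // MemAc K f},
        gaugem (Φ f).1 (Φ g).1 = gaugem g.1 f.1) ∧
      (∀ (h1 : MemAc K (fun _ => (1 : ℝ))) (h1' : MemAc K' (fun _ => (1 : ℝ))),
        Φ ⟨fun _ => 1, h1⟩ = ⟨fun _ => 1, h1'⟩) ∧
      (∀ (f : {f : K → ℝ // MemAc K f}) (ψ' : K'.extremePoints ℝ),
        (Φ f).1 ⟨(ψ' : E'), extremePoints_subset ψ'.2⟩
          = 1 / f.1 ⟨(α.symm ψ' : E), extremePoints_subset (α.symm ψ').2⟩) := by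

  classical
  set Φ : {f : K → ℝ // MemAc K f} → {g : K' → ℝ // MemAc K' g} :=
    fun f => Classical.choose (hext f) with hΦdef
  have hΦ : ∀ (f : {f : K → ℝ // MemAc K f}) (ψ' : K'.extremePoints ℝ),
      (Φ f).1 ⟨(ψ' : E'), extremePoints_subset ψ'.2⟩
        = 1 / f.1 ⟨(α.symm ψ' : E), extremePoints_subset (α.symm ψ').2⟩ :=
    fun f => Classical.choose_spec (hext f)
  refine ⟨Φ, ⟨?_, ?_⟩, ?_, ?_, hΦ⟩
  · -- injective
    intro f g hfg
    apply Subtype.ext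
    apply eq_of_extreme hKcp hKcv f.2 g.2
    intro ψ
    have h1 := hΦ f (α ψ)
    have h2 := hΦ g (α ψ)
    rw [hfg] at h1
    have hv : ((α.symm (α ψ) : E)) = (ψ : E) :=
      congrArg Subtype.val (α.symm_apply_apply ψ)
    have hvf : f.1 ⟨(α.symm (α ψ) : E), extremePoints_subset (α.symm (α ψ)).2⟩
        = f.1 ⟨(ψ : E), extremePoints_subset ψ.2⟩ := congrArg f.1 (Subtype.ext hv)
    have hvg : g.1 ⟨(α.symm (α ψ) : E), extremePoints_subset (α.symm (α ψ)).2⟩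
        = g.1 ⟨(ψ : E), extremePoints_subset ψ.2⟩ := congrArg g.1 (Subtype.ext hv)
    have h3 : 1 / f.1 ⟨(ψ : E), extremePoints_subset ψ.2⟩
        = 1 / g.1 ⟨(ψ : E), extremePoints_subset ψ.2⟩ := by
      rw [← hvf, ← hvg, ← h1, ← h2]
    calc f.1 ⟨(ψ : E), extremePoints_subset ψ.2⟩
        = 1 / (1 / f.1 ⟨(ψ : E), extremePoints_subset ψ.2⟩) := (one_div_one_div _).symm
      _ = 1 / (1 / g.1 ⟨(ψ : E), extremePoints_subset ψ.2⟩) := by rw [h3]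
      _ = g.1 ⟨(ψ : E), extremePoints_subset ψ.2⟩ := one_div_one_div _
  · -- surjective
    intro g
    obtain ⟨G, hG⟩ := hext' g
    refine ⟨G, Subtype.ext ?_⟩
    apply eq_of_extreme hK'cp hK'cv (Φ G).2 g.2
    intro ψ'
    rw [hΦ G ψ', hG (α.symm ψ')]
    have hv : ((α (α.symm ψ') : E')) = (ψ' : E') :=
      congrArg Subtype.val (α.apply_symm_apply ψ')
    have hvg : g.1 ⟨(α (α.symm ψ') : E'), extremePoints_subset (α (α.symm ψ')).2⟩
        = g.1 ⟨(ψ' : E'), extremePoints_subset ψ'.2⟩ := congrArg g.1 (Subtype.ext hv)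
    rw [hvg, one_div_one_div]
  · -- gauge reversing
    intro f g
    unfold gaugem
    congr 1
    ext l
    simp only [Set.mem_setOf_eq]
    constructor
    · rintro ⟨hl, hle⟩
      refine ⟨hl, ?_⟩
      have key : ∀ x : K, 0 ≤ 1 * g.1 x + (-l) * f.1 x := by
        refine nonneg_of_extreme hKcp hKcv
          ((continuous_const.mul g.2.1).add (continuous_const.mul f.2.1))
          (isAffineOn_comb g.2.2.1 f.2.2.1 1 (-l)) ?_
        intro ψ
        have h1 := hΦ f (α ψ)
        have h2 := hΦ g (α ψ)
        have hle' := hle ⟨(α ψ : E'), extremePoints_subset (α ψ).2⟩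
        rw [h1, h2] at hle'
        have hv : ((α.symm (α ψ) : E)) = (ψ : E) :=
          congrArg Subtype.val (α.symm_apply_apply ψ)
        have hvf : f.1 ⟨(α.symm (α ψ) : E), extremePoints_subset (α.symm (α ψ)).2⟩
            = f.1 ⟨(ψ : E), extremePoints_subset ψ.2⟩ := congrArg f.1 (Subtype.ext hv)
        have hvg : g.1 ⟨(α.symm (α ψ) : E), extremePoints_subset (α.symm (α ψ)).2⟩
            = g.1 ⟨(ψ : E), extremePoints_subset ψ.2⟩ := congrArg g.1 (Subtype.ext hv)
        rw [hvf, hvg] at hle'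
        have hfp := f.2.2.2 ⟨(ψ : E), extremePoints_subset ψ.2⟩
        have hgp := g.2.2.2 ⟨(ψ : E), extremePoints_subset ψ.2⟩
        rw [mul_one_div, div_le_div_iff₀ hgp hfp] at hle'
        nlinarith
      intro x
      have := key x
      linarith
    · rintro ⟨hl, hle⟩
      refine ⟨hl, ?_⟩
      have key : ∀ x : K', 0 ≤ 1 * (Φ f).1 x + (-l) * (Φ g).1 x := by
        refine nonneg_of_extreme hK'cp hK'cv
          ((continuous_const.mul (Φ f).2.1).add (continuous_const.mul (Φ g).2.1))
          (isAffineOn_comb (Φ f).2.2.1 (Φ g).2.2.1 1 (-l)) ?_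
        intro ψ'
        rw [hΦ f ψ', hΦ g ψ']
        have hle' := hle ⟨(α.symm ψ' : E), extremePoints_subset (α.symm ψ').2⟩
        have hfp := f.2.2.2 ⟨(α.symm ψ' : E), extremePoints_subset (α.symm ψ').2⟩
        have hgp := g.2.2.2 ⟨(α.symm ψ' : E), extremePoints_subset (α.symm ψ').2⟩
        have h4 : l * (1 / g.1 ⟨(α.symm ψ' : E), extremePoints_subset (α.symm ψ').2⟩)
            ≤ 1 / f.1 ⟨(α.symm ψ' : E), extremePoints_subset (α.symm ψ').2⟩ := by
          rw [mul_one_div, div_le_div_iff₀ hgp hfp]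
          nlinarith
        nlinarith
      intro x
      have := key x
      linarith
  · -- Φ 1 = 1
    intro h1 h1'
    apply Subtype.ext
    apply eq_of_extreme hK'cp hK'cv (Φ ⟨fun _ => 1, h1⟩).2 h1'
    intro ψ'
    rw [hΦ ⟨fun _ => 1, h1⟩ ψ']
    norm_num
end
end

section
/- Let K and K' be nonempty compact convex sets and let Φ : A_c(K) → A_c(K') be a gauge-preserving bijection with Φ(1_K) = 1_{K'}. Then there exists a bijection α : ∂_e K → ∂_e K' such that for every f ∈ A_c(K) and every ψ' ∈ ∂_e K' one has Φ(f)(ψ') = f(α^{-1}(ψ')), and for every g ∈ A_c(K') and every ψ ∈ ∂_e K one has Φ^{-1}(g)(ψ) = g(α(ψ)). -/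
open Set

noncomputable section

set_option linter.unusedSectionVars false

namespace S2

variable {E : Type*} [AddCommGroup E] [Module ℝ E] [TopologicalSpace E]
  [IsTopologicalAddGroup E] [ContinuousSMul ℝ E] [T2Space E] [LocallyConvexSpace ℝ E]
  {K : Set E}

lemma memAc_const {c : ℝ} (hc : 0 < c) : MemAc K (fun _ => c) := by
  refine ⟨continuous_const, ?_, fun _ => hc⟩
  intro x y t _ _ _; ring

lemma memAc_smul {f : K → ℝ} (hf : MemAc K f) {c : ℝ} (hc : 0 < c) :
    MemAc K (fun x => c * f x) := by
  refine ⟨(continuous_const.mul hf.1), ?_, fun x => mul_pos hc (hf.2.2 x)⟩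
  intro x y t ht ht1 h
  show c * f ⟨_, h⟩ = _
  rw [hf.2.1 x y t ht ht1 h]; ring

/-- affine combination formula with coefficients `a + b = 1`. -/
lemma affine_combo {f : K → ℝ} (hf : IsAffineOn K f) (x y : K) {a b : ℝ}
    (ha : 0 ≤ a) (hb : 0 ≤ b) (hab : a + b = 1)
    (h : a • (x : E) + b • (y : E) ∈ K) :
    f ⟨a • (x : E) + b • (y : E), h⟩ = a * f x + b * f y := by
  have hb' : b = 1 - a := by linarith
  subst hb'
  exact hf x y a ha (by linarith) h

lemma exists_min (hKcp : IsCompact K) (hKne : K.Nonempty) {φ : K → ℝ}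
    (hφ : Continuous φ) : ∃ x₀ : K, ∀ x, φ x₀ ≤ φ x := by
  haveI : CompactSpace K := isCompact_iff_compactSpace.mp hKcp
  haveI : Nonempty K := hKne.to_subtype
  obtain ⟨x₀, -, hx₀⟩ :=
    isCompact_univ.exists_isMinOn (univ_nonempty) hφ.continuousOn
  exact ⟨x₀, fun x => hx₀ (mem_univ x)⟩

section Gauge

variable (hKcp : IsCompact K) (hKne : K.Nonempty)
variable {f g : K → ℝ} (hf : MemAc K f) (hg : MemAc K g)
include hKcp hKne hf hg

lemma gauge_spec :
    0 < gaugem f g ∧ (∀ x, gaugem f g * g x ≤ f x) ∧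
      (∀ l : ℝ, (∀ x, l * g x ≤ f x) → l ≤ gaugem f g) := by
  obtain ⟨x₀, hx₀⟩ := exists_min hKcp hKne (φ := fun x => f x / g x)
    (hf.1.div hg.1 (fun x => (hg.2.2 x).ne'))
  set r : ℝ := f x₀ / g x₀ with hr
  have hrpos : 0 < r := div_pos (hf.2.2 x₀) (hg.2.2 x₀)
  have hset : {l : ℝ | 0 < l ∧ ∀ x : K, l * g x ≤ f x} = Ioc 0 r := by
    ext l
    constructor
    · rintro ⟨hl, hlx⟩
      exact ⟨hl, (le_div_iff₀ (hg.2.2 x₀)).mpr (hlx x₀)⟩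
    · rintro ⟨hl, hlr⟩
      refine ⟨hl, fun x => ?_⟩
      have : r ≤ f x / g x := hx₀ x
      have : l ≤ f x / g x := le_trans hlr this
      exact (le_div_iff₀ (hg.2.2 x)).mp this
  have hgauge : gaugem f g = r := by
    rw [gaugem, hset, csSup_Ioc hrpos]
  refine ⟨by rw [hgauge]; exact hrpos, ?_, ?_⟩
  · intro x
    have : r ≤ f x / g x := hx₀ x
    rw [hgauge]
    exact (le_div_iff₀ (hg.2.2 x)).mp this
  · intro l hl
    rcases le_or_gt l 0 with h0 | h0
    · rw [hgauge]; linarith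
    · have : l ∈ Ioc 0 r := by rw [← hset]; exact ⟨h0, hl⟩
      rw [hgauge]; exact this.2

lemma gauge_pos : 0 < gaugem f g := (gauge_spec hKcp hKne hf hg).1

lemma gauge_mul_le : ∀ x, gaugem f g * g x ≤ f x := (gauge_spec hKcp hKne hf hg).2.1

lemma le_gauge {l : ℝ} (h : ∀ x, l * g x ≤ f x) : l ≤ gaugem f g :=
  (gauge_spec hKcp hKne hf hg).2.2 l h

/-- `f ≤ g` iff `1 ≤ m(g,f)`. -/
lemma le_iff_one_le_gauge : (∀ x, f x ≤ g x) ↔ 1 ≤ gaugem g f := by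
  constructor
  · intro h
    exact le_gauge hKcp hKne hg hf (fun x => by simpa using h x)
  · intro h x
    have h2 := gauge_mul_le hKcp hKne hg hf x
    nlinarith [hf.2.2 x]

end Gauge

lemma gauge_smul_self (hKne : K.Nonempty) {f : K → ℝ} (hf : MemAc K f) {c : ℝ} (hc : 0 < c) :
    gaugem (fun x => c * f x) f = c := by
  have hset : {l : ℝ | 0 < l ∧ ∀ x : K, l * f x ≤ c * f x} = Ioc 0 c := by
    ext l
    simp only [mem_setOf_eq, mem_Ioc]
    constructor
    · rintro ⟨hl, hlx⟩
      refine ⟨hl, ?_⟩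
      obtain ⟨x, hx⟩ := hKne
      have := hlx ⟨x, hx⟩
      nlinarith [hf.2.2 ⟨x, hx⟩]
    · rintro ⟨hl, hlc⟩
      exact ⟨hl, fun x => by nlinarith [(hf.2.2 x).le]⟩
  rw [gaugem, hset, csSup_Ioc hc]


lemma gauge_self_smul (hKne : K.Nonempty) {f : K → ℝ} (hf : MemAc K f) {c : ℝ} (hc : 0 < c) :
    gaugem f (fun x => c * f x) = 1 / c := by
  have hset : {l : ℝ | 0 < l ∧ ∀ x : K, l * (c * f x) ≤ f x} = Ioc 0 (1/c) := by
    ext l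
    simp only [mem_setOf_eq, mem_Ioc]
    constructor
    · rintro ⟨hl, hlx⟩
      refine ⟨hl, ?_⟩
      obtain ⟨x, hx⟩ := hKne
      have := hlx ⟨x, hx⟩
      rw [le_div_iff₀ hc]
      nlinarith [hf.2.2 ⟨x, hx⟩]
    · rintro ⟨hl, hlc⟩
      rw [le_div_iff₀ hc] at hlc
      exact ⟨hl, fun x => by nlinarith [(hf.2.2 x).le]⟩
  rw [gaugem, hset, csSup_Ioc (by positivity)]

/-- Krein-Milman based positivity: a continuous affine function nonnegative on
extreme points is nonnegative everywhere. -/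
lemma nonneg_of_nonneg_extreme (hKcp : IsCompact K) (hKcv : Convex ℝ K)
    {f : K → ℝ} (hfc : Continuous f) (hfa : IsAffineOn K f)
    (h : ∀ x : K, ↑x ∈ extremePoints ℝ K → 0 ≤ f x) : ∀ x, 0 ≤ f x := by
  haveI : CompactSpace K := isCompact_iff_compactSpace.mp hKcp
  set F : Set E := Subtype.val '' {x : K | 0 ≤ f x} with hF
  have hFsub : F ⊆ K := by rintro _ ⟨x, -, rfl⟩; exact x.2
  have hFclosed : IsClosed F := by
    have : IsCompact F := by
      apply IsCompact.image _ continuous_subtype_val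
      exact (isClosed_le continuous_const hfc).isCompact
    exact this.isClosed
  have hFconv : Convex ℝ F := by
    rintro _ ⟨x, hx, rfl⟩ _ ⟨y, hy, rfl⟩ a b ha hb hab
    have hmem : a • (x : E) + b • (y : E) ∈ K := hKcv x.2 y.2 ha hb hab
    refine ⟨⟨a • (x : E) + b • (y : E), hmem⟩, ?_, rfl⟩
    show 0 ≤ f _
    rw [affine_combo hfa x y ha hb hab hmem]
    have hx' : 0 ≤ f x := hx
    have hy' : 0 ≤ f y := hy
    positivity
  have hExt : extremePoints ℝ K ⊆ F := by
    intro z hz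
    exact ⟨⟨z, hz.1⟩, h ⟨z, hz.1⟩ hz, rfl⟩
  have hKF : K ⊆ F := by
    conv_lhs => rw [← closure_convexHull_extremePoints hKcp hKcv]
    rw [← hFclosed.closure_eq]
    apply closure_mono
    exact convexHull_min hExt hFconv
  intro x
  obtain ⟨y, hy, hyx⟩ := hKF x.2
  have : y = x := Subtype.ext hyx
  rwa [this] at hy

lemma extreme_nonempty (hKne : K.Nonempty) (hKcp : IsCompact K) (hKcv : Convex ℝ K) :
    (extremePoints ℝ K).Nonempty := by
  by_contra h
  rw [not_nonempty_iff_eq_empty] at h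
  have := closure_convexHull_extremePoints hKcp hKcv
  rw [h] at this
  simp only [convexHull_empty, closure_empty] at this
  exact hKne.ne_empty this.symm

/-- Build an element of `A_c(K)` from a continuous linear functional. -/
lemma memAc_ofLin (L : E →L[ℝ] ℝ) (a b : ℝ)
    (hpos : ∀ x : K, 0 < a * L ↑x + b) :
    MemAc K (fun x : K => a * L ↑x + b) := by
  refine ⟨?_, ?_, hpos⟩
  · exact ((continuous_const.mul (L.continuous.comp continuous_subtype_val)).add
      continuous_const)
  · intro x y t ht ht1 h
    show a * L (t • (x:E) + (1-t) • (y:E)) + b = _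
    rw [map_add, map_smul, map_smul]
    simp only [smul_eq_mul]
    ring

/-- points of `K` are separated by `A_c(K)`. -/
lemma separation (hKcp : IsCompact K) (hKne : K.Nonempty) (x y : K)
    (h : ∀ f : {f : K → ℝ // MemAc K f}, f.1 x ≤ f.1 y) : x = y := by
  by_contra hxy
  have hxy' : (y : E) ≠ (x : E) := fun hh => hxy (Subtype.ext hh.symm)
  obtain ⟨L, hL⟩ := geometric_hahn_banach_point_point hxy'
  -- L y < L x ; build f ∈ A_c with f = L - B + 1
  obtain ⟨x₀, hx₀⟩ := exists_min hKcp hKne (φ := fun z : K => L ↑z)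
    (L.continuous.comp continuous_subtype_val)
  set B : ℝ := L ↑x₀ with hB
  have hmem : MemAc K (fun z : K => 1 * L ↑z + (1 - B)) := by
    apply memAc_ofLin
    intro z
    have := hx₀ z
    simp only [one_mul]
    linarith
  have := h ⟨_, hmem⟩
  simp only [one_mul] at this
  have : L ↑x ≤ L ↑y := by linarith
  linarith


section Envelope

variable (hKcp : IsCompact K) (hKcv : Convex ℝ K)
include hKcp hKcv

/-- The two-function envelope lemma at an extreme point. -/
lemma env_pair {ψ : K} (hψ : ↑ψ ∈ extremePoints ℝ K)
    (g₁ g₂ : {f : K → ℝ // MemAc K f}) {ε : ℝ} (hε : 0 < ε) :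
    ∃ h : {f : K → ℝ // MemAc K f},
      (∀ x, g₁.1 x ≤ h.1 x) ∧ (∀ x, g₂.1 x ≤ h.1 x) ∧
      h.1 ψ < max (g₁.1 ψ) (g₂.1 ψ) + ε := by
  classical
  haveI : CompactSpace K := isCompact_iff_compactSpace.mp hKcp
  set M : ℝ := max (g₁.1 ψ) (g₂.1 ψ) with hM
  -- truncated hypographs
  let Cs : Fin 2 → Set (E × ℝ) := fun i =>
    {p | ∃ x : K, ↑x = p.1 ∧ 0 ≤ p.2 ∧ p.2 ≤ (if i = 0 then g₁ else g₂).1 x}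
  have hg : ∀ i : Fin 2, MemAc K (if i = 0 then g₁ else g₂).1 := fun i => by
    by_cases h : i = 0 <;> simp [h, g₁.2, g₂.2]
  have hCconv : ∀ i, Convex ℝ (Cs i) := by
    intro i
    rintro p ⟨x, hx1, hx2, hx3⟩ q ⟨y, hy1, hy2, hy3⟩ a b ha hb hab
    have hmem : a • (x : E) + b • (y : E) ∈ K := hKcv x.2 y.2 ha hb hab
    refine ⟨⟨a • (x : E) + b • (y : E), hmem⟩, ?_, ?_, ?_⟩
    · show a • (x : E) + b • (y : E) = a • p.1 + b • q.1
      rw [hx1, hy1]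
    · show (0:ℝ) ≤ (a • p + b • q).2
      have : (a • p + b • q).2 = a * p.2 + b * q.2 := rfl
      rw [this]; positivity
    · show (a • p + b • q).2 ≤ _
      have h2 : (a • p + b • q).2 = a * p.2 + b * q.2 := rfl
      rw [h2, affine_combo (hg i).2.1 x y ha hb hab hmem]
      have := (hg i).2.2
      nlinarith [mul_le_mul_of_nonneg_left hx3 ha, mul_le_mul_of_nonneg_left hy3 hb]
  have hCcomp : ∀ i, IsCompact (Cs i) := by
    intro i
    have himg : Cs i = (fun q : K × ℝ => ((q.1 : E), q.2 * (if i = 0 then g₁ else g₂).1 q.1)) ''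
        (univ ×ˢ Icc (0:ℝ) 1) := by
      ext p
      constructor
      · rintro ⟨x, hx1, hx2, hx3⟩
        have hpos := (hg i).2.2 x
        refine ⟨(x, p.2 / (if i = 0 then g₁ else g₂).1 x), ⟨mem_univ _, ?_, ?_⟩, ?_⟩
        · positivity
        · rw [div_le_one hpos]; exact hx3
        · refine Prod.ext hx1 ?_
          show p.2 / (if i = 0 then g₁ else g₂).1 x * (if i = 0 then g₁ else g₂).1 x = p.2
          exact div_mul_cancel₀ _ hpos.ne'
      · rintro ⟨⟨x, t⟩, ⟨-, ht0, ht1⟩, rfl⟩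
        have hpos := (hg i).2.2 x
        simp only at ht0 ht1
        refine ⟨x, rfl, by positivity, ?_⟩
        show t * _ ≤ _
        nlinarith
    rw [himg]
    apply IsCompact.image (isCompact_univ.prod isCompact_Icc)
    exact (continuous_subtype_val.comp continuous_fst).prodMk
      (continuous_snd.mul ((hg i).1.comp continuous_fst))
  have hCne : ∀ i, ((ψ : E), (0:ℝ)) ∈ Cs i := fun i => ⟨ψ, rfl, le_refl _, ((hg i).2.2 ψ).le⟩
  -- the join
  set J : Set (E × ℝ) := convexJoin ℝ (Cs 0) (Cs 1) with hJ
  have hJconv : Convex ℝ J := (hCconv 0).convexJoin (hCconv 1)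
  have hJcomp : IsCompact J := by
    have himg : J = (fun p : ℝ × ((E × ℝ) × (E × ℝ)) => (1 - p.1) • p.2.1 + p.1 • p.2.2) ''
        (Icc (0:ℝ) 1 ×ˢ (Cs 0 ×ˢ Cs 1)) := by
      ext p
      rw [hJ, mem_convexJoin]
      constructor
      · rintro ⟨a, ha, b, hb, hseg⟩
        rw [segment_eq_image] at hseg
        obtain ⟨θ, hθ, rfl⟩ := hseg
        exact ⟨(θ, (a, b)), ⟨hθ, ha, hb⟩, rfl⟩
      · rintro ⟨⟨θ, a, b⟩, ⟨hθ, ha, hb⟩, rfl⟩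
        refine ⟨a, ha, b, hb, ?_⟩
        rw [segment_eq_image]
        exact ⟨θ, hθ, rfl⟩
    rw [himg]
    apply IsCompact.image (isCompact_Icc.prod ((hCcomp 0).prod (hCcomp 1)))
    apply Continuous.add
    · exact ((continuous_const.sub continuous_fst).smul (continuous_fst.comp continuous_snd))
    · exact (continuous_fst.smul (continuous_snd.comp continuous_snd))
  have hJclosed : IsClosed J := hJcomp.isClosed
  have hC0J : Cs 0 ⊆ J := by
    intro p hp
    rw [hJ, mem_convexJoin]
    exact ⟨p, hp, _, hCne 1, left_mem_segment ℝ _ _⟩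
  have hC1J : Cs 1 ⊆ J := by
    intro p hp
    rw [hJ, mem_convexJoin]
    exact ⟨_, hCne 0, p, hp, right_mem_segment ℝ _ _⟩
  -- the point to separate
  set P : E × ℝ := ((ψ : E), M + ε) with hP
  have hPJ : P ∉ J := by
    intro hPJ
    rw [hJ, mem_convexJoin] at hPJ
    obtain ⟨p, hp, q, hq, a, b, ha, hb, hab, habP⟩ := hPJ
    obtain ⟨x, hx1, hx2, hx3⟩ := hp
    obtain ⟨y, hy1, hy2, hy3⟩ := hq
    have hx3' : p.2 ≤ g₁.1 x := by simpa using hx3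
    have hy3' : q.2 ≤ g₂.1 y := by simpa using hy3
    clear hx3 hy3
    have hfst : a • p.1 + b • q.1 = (ψ : E) := congrArg Prod.fst habP
    have hsnd : a * p.2 + b * q.2 = M + ε := congrArg Prod.snd habP
    have hg1M : g₁.1 ψ ≤ M := le_max_left _ _
    have hg2M : g₂.1 ψ ≤ M := le_max_right _ _
    rcases eq_or_lt_of_le ha with ha0 | ha0
    · -- a = 0, b = 1
      have hb1 : b = 1 := by linarith
      have hq1 : q.1 = (ψ : E) := by
        rw [← ha0, hb1] at hfst; simpa using hfst
      have hyψ : y = ψ := Subtype.ext (by rw [hy1, hq1])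
      rw [← ha0, hb1] at hsnd
      simp only [zero_mul, one_mul, zero_add] at hsnd
      rw [hyψ] at hy3'
      have : q.2 = M + ε := hsnd
      linarith
    rcases eq_or_lt_of_le hb with hb0 | hb0
    · have ha1 : a = 1 := by linarith
      have hp1 : p.1 = (ψ : E) := by
        rw [← hb0, ha1] at hfst; simpa using hfst
      have hxψ : x = ψ := Subtype.ext (by rw [hx1, hp1])
      rw [← hb0, ha1] at hsnd
      simp only [zero_mul, one_mul, add_zero] at hsnd
      rw [hxψ] at hx3'
      linarith
    · -- open segment case : extremality
      have hext := (mem_extremePoints.mp hψ).2 p.1 (by rw [← hx1]; exact x.2)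
        q.1 (by rw [← hy1]; exact y.2) ⟨a, b, ha0, hb0, hab, hfst⟩
      have hxψ : x = ψ := Subtype.ext (by rw [hx1, hext.1])
      have hyψ : y = ψ := Subtype.ext (by rw [hy1, hext.2])
      rw [hxψ] at hx3'; rw [hyψ] at hy3'
      nlinarith
  obtain ⟨Λ, u, hΛP, hΛJ⟩ := geometric_hahn_banach_point_closed hJconv hJclosed hPJ
  set c : ℝ := Λ ((0 : E), (1 : ℝ)) with hc
  have hΛsplit : ∀ (z : E) (r : ℝ), Λ (z, r) = Λ (z, 0) + r * c := by
    intro z r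
    have : ((z, r) : E × ℝ) = (z, 0) + r • ((0:E), (1:ℝ)) := by
      simp [Prod.ext_iff]
    rw [this, map_add, map_smul, smul_eq_mul]
  have hgψJ : ((ψ : E), g₁.1 ψ) ∈ J := by
    refine hC0J ⟨ψ, rfl, (g₁.2.2.2 ψ).le, ?_⟩
    show g₁.1 ψ ≤ ((if (0 : Fin 2) = 0 then g₁ else g₂)).1 ψ
    rw [if_pos (rfl : (0 : Fin 2) = 0)]
  have hcneg : c < 0 := by
    have h1 := hΛJ _ hgψJ
    rw [hΛsplit] at h1
    have h2 : Λ ((ψ:E), 0) + (M + ε) * c < u := by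
      have := hΛP; rw [hP, hΛsplit] at this; exact this
    by_contra hcon
    push_neg at hcon
    have hle : g₁.1 ψ ≤ M + ε := by
      have := le_max_left (g₁.1 ψ) (g₂.1 ψ)
      rw [hM]; linarith
    nlinarith [mul_le_mul_of_nonneg_right hle hcon]
  -- construct h
  set L₀ : E →L[ℝ] ℝ := Λ.comp (ContinuousLinearMap.inl ℝ E ℝ) with hL₀
  have hL₀eval : ∀ z : E, L₀ z = Λ (z, 0) := fun z => rfl
  have hkey : ∀ (x : K) (i : Fin 2), (if i = 0 then g₁ else g₂).1 x < (u - Λ ((x:E), 0)) / c := by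
    intro x i
    have hmem : ((x : E), (if i = 0 then g₁ else g₂).1 x) ∈ Cs i :=
      ⟨x, rfl, ((hg i).2.2 x).le, le_refl _⟩
    have hJx : ((x : E), (if i = 0 then g₁ else g₂).1 x) ∈ J := by
      by_cases h : i = 0
      · rw [h] at hmem ⊢; exact hC0J hmem
      · have : i = 1 := by omega
        rw [this] at hmem ⊢; exact hC1J hmem
    have := hΛJ _ hJx
    rw [hΛsplit] at this
    rw [lt_div_iff_of_neg hcneg]
    linarith
  have hpos : ∀ x : K, 0 < -(1/c) * L₀ ↑x + u / c := by
    intro x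
    have h1 := hkey x 0
    simp only [reduceIte] at h1
    have h2 := g₁.2.2.2 x
    have : (0:ℝ) < (u - Λ ((x:E), 0)) / c := lt_trans h2 h1
    rw [hL₀eval]
    have heq : -(1/c) * Λ ((x:E), 0) + u / c = (u - Λ ((x:E), 0)) / c := by
      field_simp; ring
    rw [heq]; exact this
  refine ⟨⟨fun x => -(1/c) * L₀ ↑x + u / c, memAc_ofLin L₀ (-(1/c)) (u/c) hpos⟩, ?_, ?_, ?_⟩
  · intro x
    have h1 := hkey x 0
    simp only [reduceIte] at h1
    show g₁.1 x ≤ -(1/c) * L₀ ↑x + u / c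
    have heq : -(1/c) * L₀ ↑x + u / c = (u - Λ ((x:E), 0)) / c := by
      rw [hL₀eval]; field_simp; ring
    rw [heq]; exact h1.le
  · intro x
    have h1 := hkey x 1
    rw [if_neg (by decide : (1 : Fin 2) ≠ 0)] at h1
    show g₂.1 x ≤ -(1/c) * L₀ ↑x + u / c
    have heq : -(1/c) * L₀ ↑x + u / c = (u - Λ ((x:E), 0)) / c := by
      rw [hL₀eval]; field_simp; ring
    rw [heq]; exact h1.le
  · show -(1/c) * L₀ ↑ψ + u / c < M + ε
    have heq : -(1/c) * L₀ ↑ψ + u / c = (u - Λ ((ψ:E), 0)) / c := by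
      rw [hL₀eval]; field_simp; ring
    rw [heq]
    have h2 : Λ ((ψ:E), 0) + (M + ε) * c < u := by
      have := hΛP; rw [hP, hΛsplit] at this; exact this
    rw [div_lt_iff_of_neg hcneg]
    linarith

/-- n-ary envelope lemma (normalized values 1). -/
lemma env_finset {ι : Type*} {ψ : K} (hψ : ↑ψ ∈ extremePoints ℝ K)
    (G : ι → {f : K → ℝ // MemAc K f}) {t : Finset ι} (ht : t.Nonempty) :
    ∀ ε : ℝ, 0 < ε → (∀ i ∈ t, (G i).1 ψ = 1) →
    ∃ h : {f : K → ℝ // MemAc K f},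
      (∀ i ∈ t, ∀ x, (G i).1 x ≤ h.1 x) ∧ h.1 ψ < 1 + ε := by
  induction ht using Finset.Nonempty.cons_induction with
  | singleton a =>
    intro ε hε hval
    obtain ⟨h, h1, -, h3⟩ := env_pair hKcp hKcv hψ (G a) (G a) hε
    refine ⟨h, ?_, ?_⟩
    · intro i hi x
      rw [Finset.mem_singleton] at hi
      subst hi; exact h1 x
    · have := hval a (Finset.mem_singleton_self a)
      rw [this] at h3
      simpa using h3
  | cons a s has hs IH =>
    intro ε hε hval
    obtain ⟨h₀, h₀1, h₀2⟩ := IH (ε/2) (by linarith)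
      (fun i hi => hval i (Finset.mem_cons_of_mem hi))
    obtain ⟨h, h1, h2, h3⟩ := env_pair hKcp hKcv hψ h₀ (G a) (show (0:ℝ) < ε/2 by linarith)
    refine ⟨h, ?_, ?_⟩
    · intro i hi x
      rcases Finset.mem_cons.mp hi with rfl | hi
      · exact h2 x
      · exact le_trans (h₀1 i hi x) (h1 x)
    · have hGa : (G a).1 ψ = 1 := hval a (Finset.mem_cons_self a s)
      rw [hGa] at h3
      have : max (h₀.1 ψ) 1 < 1 + ε/2 := by
        rw [max_lt_iff]; exact ⟨h₀2, by linarith⟩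
      calc h.1 ψ < max (h₀.1 ψ) 1 + ε/2 := h3
        _ < 1 + ε := by linarith

end Envelope

lemma cont_sup' {ι : Type*} {t : Finset ι} (ht : t.Nonempty) (F : ι → K → ℝ)
    (hF : ∀ i, Continuous (F i)) :
    Continuous fun x => t.sup' ht (fun i => F i x) := by
  induction ht using Finset.Nonempty.cons_induction with
  | singleton a => simpa using hF a
  | cons a s has hs IH =>
    have : (fun x => (Finset.cons a s has).sup' (Finset.cons_nonempty has) (fun i => F i x))
        = fun x => max (F a x) (s.sup' hs (fun i => F i x)) := by
      funext x
      rw [Finset.sup'_cons hs]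
    rw [this]
    exact (hF a).max IH

lemma affine_sub_const {f : K → ℝ} (hf : IsAffineOn K f) (c : ℝ) :
    IsAffineOn K (fun x => f x - c) := by
  intro x y t ht ht1 h
  show f ⟨_, h⟩ - c = _
  rw [hf x y t ht ht1 h]; ring

section Transfer

variable {E' : Type*} [AddCommGroup E'] [Module ℝ E'] [TopologicalSpace E']
  [IsTopologicalAddGroup E'] [ContinuousSMul ℝ E'] [T2Space E'] [LocallyConvexSpace ℝ E']
  {K' : Set E'}
variable (hKne : K.Nonempty) (hKcp : IsCompact K) (hKcv : Convex ℝ K)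
  (hK'ne : K'.Nonempty) (hK'cp : IsCompact K') (hK'cv : Convex ℝ K')
  (Φ : {f : K → ℝ // MemAc K f} → {g : K' → ℝ // MemAc K' g})
  (hbij : Function.Bijective Φ)
  (hpre : ∀ f g : {f : K → ℝ // MemAc K f},
      gaugem (Φ f).1 (Φ g).1 = gaugem f.1 g.1)

section OneSided

include hKne hKcp hK'ne hK'cp hpre

lemma horder (f g : {f : K → ℝ // MemAc K f}) :
    (∀ x, f.1 x ≤ g.1 x) ↔ (∀ x', (Φ f).1 x' ≤ (Φ g).1 x') := by
  rw [le_iff_one_le_gauge hKcp hKne f.2 g.2,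
    le_iff_one_le_gauge hK'cp hK'ne (Φ f).2 (Φ g).2, hpre]

lemma hsmul (f : {f : K → ℝ // MemAc K f}) {c : ℝ} (hc : 0 < c) :
    (Φ ⟨fun x => c * f.1 x, memAc_smul f.2 hc⟩).1 = fun x' => c * (Φ f).1 x' := by
  set cf : {f : K → ℝ // MemAc K f} := ⟨fun x => c * f.1 x, memAc_smul f.2 hc⟩ with hcf
  have m1 : gaugem (Φ cf).1 (Φ f).1 = c := by
    rw [hpre]; exact gauge_smul_self hKne f.2 hc
  have m2 : gaugem (Φ f).1 (Φ cf).1 = 1/c := by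
    rw [hpre]; exact gauge_self_smul hKne f.2 hc
  funext x'
  have h1 := gauge_mul_le hK'cp hK'ne (Φ cf).2 (Φ f).2 x'
  rw [m1] at h1
  have h2 := gauge_mul_le hK'cp hK'ne (Φ f).2 (Φ cf).2 x'
  rw [m2] at h2
  have h3 := mul_le_mul_of_nonneg_left h2 hc.le
  rw [← mul_assoc, mul_one_div, div_self hc.ne', one_mul] at h3
  exact le_antisymm h3 h1

end OneSided

variable (hone : ∀ (h1 : MemAc K (fun _ => (1 : ℝ))) (h1' : MemAc K' (fun _ => (1 : ℝ))),
      Φ ⟨fun _ => 1, h1⟩ = ⟨fun _ => 1, h1'⟩)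

section OneSided2

include hKne hKcp hK'ne hK'cp hbij hpre hone

lemma hconst {c : ℝ} (hc : 0 < c) (hm : MemAc K (fun _ => c)) :
    (Φ ⟨fun _ => c, hm⟩).1 = fun _ => c := by
  have h1 : (⟨fun _ => c, hm⟩ : {f : K → ℝ // MemAc K f})
      = ⟨fun x => c * (fun _ => (1:ℝ)) x, memAc_smul (memAc_const one_pos) hc⟩ :=
    Subtype.ext (funext fun x => (mul_one c).symm)
  rw [h1, hsmul hKne hKcp hK'ne hK'cp Φ hpre ⟨fun _ => (1:ℝ), memAc_const one_pos⟩ hc,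
    hone (memAc_const one_pos) (memAc_const one_pos)]
  funext x'
  simp

/-- finite ψ⁻ lemma : a finite family can be simultaneously dominated at some
point of the closure of the extreme boundary. -/
lemma psi_minus (hKcv : Convex ℝ K) (hK'cv : Convex ℝ K')
    {ψ' : K'} (hψ' : ↑ψ' ∈ extremePoints ℝ K')
    (t : Finset {f : K → ℝ // MemAc K f}) :
    ∃ x : K, x ∈ closure {y : K | ↑y ∈ extremePoints ℝ K} ∧
      ∀ f ∈ t, f.1 x ≤ (Φ f).1 ψ' := by
  classical
  haveI : CompactSpace K := isCompact_iff_compactSpace.mp hKcp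
  obtain ⟨e0, he0⟩ := extreme_nonempty hKne hKcp hKcv
  have he0' : (⟨e0, he0.1⟩ : K) ∈ {y : K | ↑y ∈ extremePoints ℝ K} := he0
  rcases t.eq_empty_or_nonempty with rfl | ht
  · exact ⟨⟨e0, he0.1⟩, subset_closure he0', by simp⟩
  by_contra hcon
  push_neg at hcon
  -- for every x in the closure of the extreme boundary some f ∈ t exceeds its target
  set z : {f : K → ℝ // MemAc K f} → ℝ := fun f => (Φ f).1 ψ' with hz
  have hzpos : ∀ f, 0 < z f := fun f => (Φ f).2.2.2 ψ'
  set Xs : Set K := closure {y : K | ↑y ∈ extremePoints ℝ K} with hXs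
  have hXsc : IsCompact Xs := isClosed_closure.isCompact
  have hXsne : Xs.Nonempty := ⟨⟨e0, he0.1⟩, subset_closure he0'⟩
  set φ : K → ℝ := fun x => t.sup' ht (fun f => f.1 x / z f) with hφ
  have hφc : Continuous φ :=
    cont_sup' ht _ (fun f => (f.2.1.div continuous_const (fun _ => (hzpos f).ne')))
  obtain ⟨xm, hxm, hxmin⟩ := hXsc.exists_isMinOn hXsne hφc.continuousOn
  set c : ℝ := φ xm with hc
  have hcgt : 1 < c := by
    obtain ⟨f, hf, hfx⟩ := hcon xm hxm
    have : f.1 xm / z f ≤ c := Finset.le_sup' (fun f => f.1 xm / z f) hf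
    have h1 : 1 < f.1 xm / z f := (one_lt_div (hzpos f)).mpr hfx
    linarith
  -- K-side implication
  have hKside : ∀ h : {f : K → ℝ // MemAc K f},
      (∀ f ∈ t, ∀ x, f.1 x / z f ≤ h.1 x) → ∀ x, c ≤ h.1 x := by
    intro h hh
    have := nonneg_of_nonneg_extreme hKcp hKcv
      (f := fun x => h.1 x - c) (h.2.1.sub continuous_const)
      (affine_sub_const h.2.2.1 c) ?_
    · intro x; have h5 := this x; linarith
    · intro x hx
      have hxX : x ∈ Xs := subset_closure hx
      have h1 : c ≤ φ x := hxmin hxX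
      obtain ⟨f0, hf0, hf0e⟩ := Finset.exists_mem_eq_sup' ht (fun f => f.1 x / z f)
      have h2 : φ x = f0.1 x / z f0 := hf0e
      have h3 : f0.1 x / z f0 ≤ h.1 x := hh f0 hf0 x
      simp only [sub_nonneg]
      calc c ≤ φ x := h1
        _ ≤ h.1 x := by rw [h2]; exact h3
  -- transfer to K'
  have hK'side : ∀ h' : {g : K' → ℝ // MemAc K' g},
      (∀ f ∈ t, ∀ x', (1 / z f) * (Φ f).1 x' ≤ h'.1 x') → c ≤ h'.1 ψ' := by
    intro h' hh'
    obtain ⟨h, rfl⟩ := hbij.surjective h'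
    -- pull the hypothesis back
    have hKprem : ∀ f ∈ t, ∀ x, f.1 x / z f ≤ h.1 x := by
      intro f hf x
      have hcz : 0 < 1 / z f := one_div_pos.mpr (hzpos f)
      have heq := hsmul hKne hKcp hK'ne hK'cp Φ hpre f hcz
      have h2 : ∀ x', (Φ ⟨fun x => (1 / z f) * f.1 x, memAc_smul f.2 hcz⟩).1 x'
          ≤ (Φ h).1 x' := by
        intro x'
        rw [heq]
        exact hh' f hf x'
      have h3 := (horder hKne hKcp hK'ne hK'cp Φ hpre _ h).mpr h2 x
      simp only at h3
      calc f.1 x / z f = (1 / z f) * f.1 x := by ring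
        _ ≤ h.1 x := h3
    have h4 := hKside h hKprem
    -- c·1 ≤ h, transfer forward
    have hcpos : (0:ℝ) < c := by linarith
    have h5 : ∀ x, (⟨fun _ => c, memAc_const hcpos⟩ :
        {f : K → ℝ // MemAc K f}).1 x ≤ h.1 x := fun x => h4 x
    have h6 := (horder hKne hKcp hK'ne hK'cp Φ hpre _ h).mp h5 ψ'
    rwa [hconst hKne hKcp hK'ne hK'cp Φ hbij hpre hone hcpos] at h6
  -- contradiction via the envelope lemma at ψ'
  set G : {f : K → ℝ // MemAc K f} → {g : K' → ℝ // MemAc K' g} :=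
    fun f => ⟨fun x' => (1 / z f) * (Φ f).1 x',
      memAc_smul (Φ f).2 (one_div_pos.mpr (hzpos f))⟩ with hG
  have hGval : ∀ f ∈ t, (G f).1 ψ' = 1 := by
    intro f hf
    show (1 / z f) * (Φ f).1 ψ' = 1
    rw [hz]
    exact one_div_mul_cancel ((Φ f).2.2.2 ψ').ne'
  obtain ⟨h', hh'1, hh'2⟩ := env_finset hK'cp hK'cv hψ' G ht ((c-1)/2)
    (by linarith) hGval
  have := hK'side h' (fun f hf x' => hh'1 f hf x')
  linarith

lemma psi_minus_all (hKcv : Convex ℝ K) (hK'cv : Convex ℝ K')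
    {ψ' : K'} (hψ' : ↑ψ' ∈ extremePoints ℝ K') :
    ∃ x : K, x ∈ closure {y : K | ↑y ∈ extremePoints ℝ K} ∧
      ∀ f : {f : K → ℝ // MemAc K f}, f.1 x ≤ (Φ f).1 ψ' := by
  classical
  haveI : CompactSpace K := isCompact_iff_compactSpace.mp hKcp
  set Z : Finset {f : K → ℝ // MemAc K f} → Set K := fun t =>
    {x : K | x ∈ closure {y : K | ↑y ∈ extremePoints ℝ K} ∧ ∀ f ∈ t, f.1 x ≤ (Φ f).1 ψ'}
    with hZ
  have hZclosed : ∀ t, IsClosed (Z t) := by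
    intro t
    have : Z t = closure {y : K | ↑y ∈ extremePoints ℝ K} ∩
        ⋂ f ∈ t, {x : K | f.1 x ≤ (Φ f).1 ψ'} := by
      ext x; simp [hZ, mem_iInter]
    rw [this]
    exact isClosed_closure.inter (isClosed_biInter (fun f _ =>
      isClosed_le f.2.1 continuous_const))
  have hZne : ∀ t, (Z t).Nonempty := by
    intro t
    obtain ⟨x, hx1, hx2⟩ := psi_minus hKne hKcp hK'ne hK'cp Φ hbij hpre hone hKcv hK'cv hψ' t
    exact ⟨x, hx1, hx2⟩
  have hdir : Directed (fun (x1 x2 : Set K) => x1 ⊇ x2) Z := by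
    intro t1 t2
    refine ⟨t1 ∪ t2, ?_, ?_⟩
    · rintro x ⟨hx1, hx2⟩
      exact ⟨hx1, fun f hf => hx2 f (Finset.mem_union_left _ hf)⟩
    · rintro x ⟨hx1, hx2⟩
      exact ⟨hx1, fun f hf => hx2 f (Finset.mem_union_right _ hf)⟩
  have hinter := IsCompact.nonempty_iInter_of_directed_nonempty_isCompact_isClosed
    Z hdir hZne (fun t => (hZclosed t).isCompact) hZclosed
  obtain ⟨x, hx⟩ := hinter
  rw [mem_iInter] at hx
  have hx0 := hx ∅
  refine ⟨x, hx0.1, fun f => ?_⟩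
  exact (hx {f}).2 f (Finset.mem_singleton_self f)

lemma psi_minus_closure (hKcv : Convex ℝ K) (hK'cv : Convex ℝ K')
    {x' : K'} (hx' : x' ∈ closure {y : K' | ↑y ∈ extremePoints ℝ K'}) :
    ∃ x : K, x ∈ closure {y : K | ↑y ∈ extremePoints ℝ K} ∧
      ∀ f : {f : K → ℝ // MemAc K f}, f.1 x ≤ (Φ f).1 x' := by
  classical
  haveI : CompactSpace K := isCompact_iff_compactSpace.mp hKcp
  set Z : Finset {f : K → ℝ // MemAc K f} × {ε : ℝ // 0 < ε} → Set K := fun p =>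
    {x : K | x ∈ closure {y : K | ↑y ∈ extremePoints ℝ K} ∧
      ∀ f ∈ p.1, f.1 x ≤ (Φ f).1 x' + p.2.1} with hZ
  haveI : Nonempty (Finset {f : K → ℝ // MemAc K f} × {ε : ℝ // 0 < ε}) :=
    ⟨(∅, ⟨1, one_pos⟩)⟩
  have hZclosed : ∀ p, IsClosed (Z p) := by
    intro p
    have : Z p = closure {y : K | ↑y ∈ extremePoints ℝ K} ∩
        ⋂ f ∈ p.1, {x : K | f.1 x ≤ (Φ f).1 x' + p.2.1} := by
      ext x; simp [hZ, mem_iInter]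
    rw [this]
    exact isClosed_closure.inter (isClosed_biInter (fun f _ =>
      isClosed_le f.2.1 continuous_const))
  have hZne : ∀ p, (Z p).Nonempty := by
    rintro ⟨t, ε, hε⟩
    -- find an extreme point of K' близко to x'
    set N : Set K' := ⋂ f ∈ t, {y' : K' | (Φ f).1 y' < (Φ f).1 x' + ε} with hN
    have hNopen : IsOpen N := isOpen_biInter_finset (fun f _ =>
      isOpen_lt (Φ f).2.1 continuous_const)
    have hx'N : x' ∈ N := by
      rw [hN, mem_iInter]
      intro f
      rw [mem_iInter]
      intro _
      exact lt_add_of_pos_right _ hε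
    obtain ⟨ψ', hψ'N, hψ'ext⟩ := mem_closure_iff.mp hx' N hNopen hx'N
    obtain ⟨x, hx1, hx2⟩ := psi_minus hKne hKcp hK'ne hK'cp Φ hbij hpre hone hKcv hK'cv
      (show ↑ψ' ∈ extremePoints ℝ K' from hψ'ext) t
    refine ⟨x, hx1, fun f hf => ?_⟩
    have h1 : (Φ f).1 ψ' < (Φ f).1 x' + ε := by
      have := hψ'N
      rw [hN, mem_iInter] at this
      have := this f
      rw [mem_iInter] at this
      exact this hf
    exact le_trans (hx2 f hf) h1.le
  have hdir : Directed (fun (x1 x2 : Set K) => x1 ⊇ x2) Z := by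
    rintro ⟨t1, ε1, hε1⟩ ⟨t2, ε2, hε2⟩
    refine ⟨(t1 ∪ t2, ⟨min ε1 ε2, lt_min hε1 hε2⟩), ?_, ?_⟩
    · rintro x ⟨hx1, hx2⟩
      refine ⟨hx1, fun f hf => ?_⟩
      have := hx2 f (Finset.mem_union_left _ hf)
      have h2 : min ε1 ε2 ≤ ε1 := min_le_left _ _
      simp only at this
      linarith
    · rintro x ⟨hx1, hx2⟩
      refine ⟨hx1, fun f hf => ?_⟩
      have := hx2 f (Finset.mem_union_right _ hf)
      have h2 : min ε1 ε2 ≤ ε2 := min_le_right _ _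
      simp only at this
      linarith
  have hinter := IsCompact.nonempty_iInter_of_directed_nonempty_isCompact_isClosed
    Z hdir hZne (fun p => (hZclosed p).isCompact) hZclosed
  obtain ⟨x, hx⟩ := hinter
  rw [mem_iInter] at hx
  have hx0 := hx (∅, ⟨1, one_pos⟩)
  refine ⟨x, hx0.1, fun f => ?_⟩
  apply le_of_forall_pos_le_add
  intro ε hε
  exact (hx ({f}, ⟨ε, hε⟩)).2 f (Finset.mem_singleton_self f)

/-- The main pointwise evaluation lemma : for every extreme point `ψ'` of `K'`
there is an extreme point `β` of `K` with `f β = (Φ f) ψ'` for all `f`. -/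
lemma eval_point (hKcv : Convex ℝ K) (hK'cv : Convex ℝ K')
    {ψ' : K'} (hψ' : ↑ψ' ∈ extremePoints ℝ K') :
    ∃ β : K, ↑β ∈ extremePoints ℝ K ∧
      ∀ f : {f : K → ℝ // MemAc K f}, f.1 β = (Φ f).1 ψ' := by
  classical
  set e := Equiv.ofBijective Φ hbij with he
  set Ψ : {g : K' → ℝ // MemAc K' g} → {f : K → ℝ // MemAc K f} :=
    fun g => e.symm g with hΨ
  have phi_psi : ∀ g, Φ (Ψ g) = g := fun g => e.apply_symm_apply g
  have psi_phi : ∀ f, Ψ (Φ f) = f := fun f => e.symm_apply_apply f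
  have hbijΨ : Function.Bijective Ψ := e.symm.bijective
  have hpreΨ : ∀ g g', gaugem (Ψ g).1 (Ψ g').1 = gaugem g.1 g'.1 := by
    intro g g'
    rw [← hpre (Ψ g) (Ψ g'), phi_psi, phi_psi]
  have honeΨ : ∀ (h1' : MemAc K' fun _ => (1:ℝ)) (h1 : MemAc K fun _ => (1:ℝ)),
      Ψ ⟨fun _ => 1, h1'⟩ = ⟨fun _ => 1, h1⟩ := by
    intro h1' h1
    have h := hone h1 h1'
    rw [← h, psi_phi]
  obtain ⟨β, hβcl, hβle⟩ :=
    psi_minus_all hKne hKcp hK'ne hK'cp Φ hbij hpre hone hKcv hK'cv hψ'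
  obtain ⟨ζ, hζcl, hζle⟩ :=
    psi_minus_closure hK'ne hK'cp hKne hKcp Ψ hbijΨ hpreΨ honeΨ hK'cv hKcv hβcl
  have hζψ : ζ = ψ' := by
    apply separation hK'cp hK'ne
    intro g
    calc g.1 ζ ≤ (Ψ g).1 β := hζle g
      _ ≤ (Φ (Ψ g)).1 ψ' := hβle (Ψ g)
      _ = g.1 ψ' := by rw [phi_psi]
  have hEval : ∀ f, f.1 β = (Φ f).1 ψ' := by
    intro f
    apply le_antisymm (hβle f)
    have h1 := hζle (Φ f)
    rw [hζψ, psi_phi] at h1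
    exact h1
  refine ⟨β, ?_, hEval⟩
  by_contra hβext
  have hβK : ↑β ∈ K := β.2
  rw [mem_extremePoints] at hβext
  push_neg at hβext
  obtain ⟨x₁, hx₁K, x₂, hx₂K, hseg, hne⟩ := hβext hβK
  obtain ⟨a, b, ha, hb, hab, hcombo⟩ := hseg
  have hx1β : x₁ = ↑β → x₂ = ↑β := by
    intro h
    have h2 : b • x₂ = b • (↑β : E) := by
      have h5 := hcombo
      rw [h] at h5
      have h6 : b • x₂ = (1 - a) • (↑β : E) := by
        rw [sub_smul, one_smul, eq_sub_iff_add_eq, add_comm]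
        exact h5
      rw [h6]
      congr 1
      linarith
    have h7 := smul_right_injective E hb.ne' h2
    rw [h7]
  have hx12 : x₁ ≠ x₂ := by
    intro h
    have h5 : a • x₁ + b • x₂ = x₂ := by
      rw [h, ← add_smul, hab, one_smul]
    have hx2 : x₂ = ↑β := by rw [← h5, hcombo]
    have hx1 : x₁ = ↑β := by rw [h]; exact hx2
    exact hne hx1 (hx1β hx1)
  obtain ⟨L, hL⟩ := geometric_hahn_banach_point_point hx12
  set X₁ : K := ⟨x₁, hx₁K⟩ with hX₁
  set X₂ : K := ⟨x₂, hx₂K⟩ with hX₂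
  have hLβ : L ↑β = a * L x₁ + b * L x₂ := by
    rw [← hcombo, map_add, map_smul, map_smul]
    simp [smul_eq_mul]
  have ha1 : a = 1 - b := by linarith
  have hL1β : L x₁ < L ↑β := by
    have h6 : L ↑β - L x₁ = b * (L x₂ - L x₁) := by rw [hLβ, ha1]; ring
    nlinarith [mul_pos hb (sub_pos.mpr hL)]
  have hLβ2 : L ↑β < L x₂ := by
    have h6 : L x₂ - L ↑β = a * (L x₂ - L x₁) := by rw [hLβ, ha1]; ring
    nlinarith [mul_pos ha (sub_pos.mpr hL)]
  obtain ⟨xlo, hxlo⟩ := exists_min hKcp hKne (φ := fun x : K => L ↑x)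
    (L.continuous.comp continuous_subtype_val)
  obtain ⟨xhi, hxhi⟩ := exists_min hKcp hKne (φ := fun x : K => -(L ↑x))
    ((L.continuous.comp continuous_subtype_val).neg)
  have hrange : ∀ x : K, L ↑xlo ≤ L ↑x ∧ L ↑x ≤ L ↑xhi := by
    intro x
    refine ⟨hxlo x, ?_⟩
    have := hxhi x
    simp only [neg_le_neg_iff] at this
    linarith [this]
  set D : ℝ := (L ↑xhi - L ↑xlo) + 1 with hD
  have hD0 : 0 < D := by
    have h1 := (hrange xlo).2
    rw [hD]; linarith
  set s : ℝ := 1 / D with hs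
  have hs0 : 0 < s := by rw [hs]; positivity
  have hsD : s * (D - 1) < 1 := by
    rw [hs]
    rw [div_mul_eq_mul_div, div_lt_one hD0]
    linarith
  have hf1pos : ∀ x : K, 0 < s * L ↑x + (1 - s * L ↑β) := by
    intro x
    have h1 := (hrange x).1
    have h4 := (hrange β).2
    have h5 : L ↑β - L ↑x ≤ D - 1 := by rw [hD]; linarith
    nlinarith
  have hf2pos : ∀ x : K, 0 < -s * L ↑x + (1 + s * L ↑β) := by
    intro x
    have h2 := (hrange x).2
    have h3 := (hrange β).1
    have h5 : L ↑x - L ↑β ≤ D - 1 := by rw [hD]; linarith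
    nlinarith
  set f₁ : {f : K → ℝ // MemAc K f} :=
    ⟨fun x => s * L ↑x + (1 - s * L ↑β), memAc_ofLin L s _ hf1pos⟩ with hf₁
  set f₂ : {f : K → ℝ // MemAc K f} :=
    ⟨fun x => -s * L ↑x + (1 + s * L ↑β), memAc_ofLin L (-s) _ hf2pos⟩ with hf₂
  have hf₁β : f₁.1 β = 1 := by show s * L ↑β + (1 - s * L ↑β) = 1; ring
  have hf₂β : f₂.1 β = 1 := by show -s * L ↑β + (1 + s * L ↑β) = 1; ring
  set η : ℝ := a * (s * (L ↑β - L x₁)) + b * (s * (L x₂ - L ↑β)) with hη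
  have hηpos : 0 < η := by
    have t1 : 0 < s * (L ↑β - L x₁) := by nlinarith
    have t2 : 0 < s * (L x₂ - L ↑β) := by nlinarith
    have := mul_pos ha t1
    have := mul_pos hb t2
    rw [hη]; linarith
  have hlow : ∀ h : {f : K → ℝ // MemAc K f},
      (∀ x, f₁.1 x ≤ h.1 x) → (∀ x, f₂.1 x ≤ h.1 x) → 1 + η ≤ h.1 β := by
    intro h h1 h2
    have hmem : a • x₁ + b • x₂ ∈ K := by rw [hcombo]; exact hβK
    have hcomboK : (⟨a • x₁ + b • x₂, hmem⟩ : K) = β := Subtype.ext hcombo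
    have haff := affine_combo h.2.2.1 X₁ X₂ ha.le hb.le hab hmem
    rw [hcomboK] at haff
    have hA := h2 X₁
    have hB := h1 X₂
    have e1 : f₂.1 X₁ = 1 + s * (L ↑β - L x₁) := by
      show -s * L x₁ + (1 + s * L ↑β) = _; ring
    have e2 : f₁.1 X₂ = 1 + s * (L x₂ - L ↑β) := by
      show s * L x₂ + (1 - s * L ↑β) = _; ring
    rw [e1] at hA
    rw [e2] at hB
    rw [haff]
    have c1 := mul_le_mul_of_nonneg_left hA ha.le
    have c2 := mul_le_mul_of_nonneg_left hB hb.le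
    rw [hη]
    nlinarith
  have hv1 : (Φ f₁).1 ψ' = 1 := by rw [← hEval f₁]; exact hf₁β
  have hv2 : (Φ f₂).1 ψ' = 1 := by rw [← hEval f₂]; exact hf₂β
  obtain ⟨h', hh1, hh2, hh3⟩ := env_pair hK'cp hK'cv hψ' (Φ f₁) (Φ f₂)
    (show (0:ℝ) < η/2 by linarith)
  rw [hv1, hv2, max_self] at hh3
  set h : {f : K → ℝ // MemAc K f} := Ψ h' with hh
  have hΦh : Φ h = h' := phi_psi h'
  have hle1 : ∀ x, f₁.1 x ≤ h.1 x := by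
    apply (horder hKne hKcp hK'ne hK'cp Φ hpre f₁ h).mpr
    intro x'
    rw [hΦh]
    exact hh1 x'
  have hle2 : ∀ x, f₂.1 x ≤ h.1 x := by
    apply (horder hKne hKcp hK'ne hK'cp Φ hpre f₂ h).mpr
    intro x'
    rw [hΦh]
    exact hh2 x'
  have hfin := hlow h hle1 hle2
  have hfinal : h.1 β = h'.1 ψ' := by
    rw [hEval h, hΦh]
  linarith

end OneSided2

end Transfer

end S2

theorem statement2
    {E E' : Type*}
    [AddCommGroup E] [Module ℝ E] [TopologicalSpace E] [IsTopologicalAddGroup E]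
    [ContinuousSMul ℝ E] [T2Space E] [LocallyConvexSpace ℝ E]
    [AddCommGroup E'] [Module ℝ E'] [TopologicalSpace E'] [IsTopologicalAddGroup E']
    [ContinuousSMul ℝ E'] [T2Space E'] [LocallyConvexSpace ℝ E']
    (K : Set E) (K' : Set E')
    (hKne : K.Nonempty) (hKcp : IsCompact K) (hKcv : Convex ℝ K)
    (hK'ne : K'.Nonempty) (hK'cp : IsCompact K') (hK'cv : Convex ℝ K')
    (Φ : {f : K → ℝ // MemAc K f} → {g : K' → ℝ // MemAc K' g})
    (hbij : Function.Bijective Φ)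
    (hpre : ∀ f g : {f : K → ℝ // MemAc K f},
      gaugem (Φ f).1 (Φ g).1 = gaugem f.1 g.1)
    (hone : ∀ (h1 : MemAc K (fun _ => (1 : ℝ))) (h1' : MemAc K' (fun _ => (1 : ℝ))),
      Φ ⟨fun _ => 1, h1⟩ = ⟨fun _ => 1, h1'⟩) :
    ∃ α : (K.extremePoints ℝ) ≃ (K'.extremePoints ℝ),
      (∀ (f : {f : K → ℝ // MemAc K f}) (ψ' : K'.extremePoints ℝ),
        (Φ f).1 ⟨(ψ' : E'), extremePoints_subset ψ'.2⟩
          = f.1 ⟨(α.symm ψ' : E), extremePoints_subset (α.symm ψ').2⟩) ∧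
      (∀ (g : {g : K' → ℝ // MemAc K' g}) (f : {f : K → ℝ // MemAc K f})
          (ψ : K.extremePoints ℝ), Φ f = g →
        f.1 ⟨(ψ : E), extremePoints_subset ψ.2⟩
          = g.1 ⟨(α ψ : E'), extremePoints_subset (α ψ).2⟩) := by
  classical
  set e := Equiv.ofBijective Φ hbij with he
  set Ψ : {g : K' → ℝ // MemAc K' g} → {f : K → ℝ // MemAc K f} :=
    fun g => e.symm g with hΨ
  have phi_psi : ∀ g, Φ (Ψ g) = g := fun g => e.apply_symm_apply g
  have psi_phi : ∀ f, Ψ (Φ f) = f := fun f => e.symm_apply_apply f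
  have hbijΨ : Function.Bijective Ψ := e.symm.bijective
  have hpreΨ : ∀ g g', gaugem (Ψ g).1 (Ψ g').1 = gaugem g.1 g'.1 := by
    intro g g'
    rw [← hpre (Ψ g) (Ψ g'), phi_psi, phi_psi]
  have honeΨ : ∀ (h1' : MemAc K' fun _ => (1:ℝ)) (h1 : MemAc K fun _ => (1:ℝ)),
      Ψ ⟨fun _ => 1, h1'⟩ = ⟨fun _ => 1, h1⟩ := by
    intro h1' h1
    have h := hone h1 h1'
    rw [← h, psi_phi]
  have hB : ∀ ψ' : K'.extremePoints ℝ, ∃ β : K, ↑β ∈ extremePoints ℝ K ∧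
      ∀ f : {f : K → ℝ // MemAc K f},
        f.1 β = (Φ f).1 ⟨(ψ' : E'), extremePoints_subset ψ'.2⟩ := by
    intro ψ'
    exact S2.eval_point hKne hKcp hK'ne hK'cp Φ hbij hpre hone hKcv hK'cv
      (ψ' := ⟨(ψ' : E'), extremePoints_subset ψ'.2⟩) ψ'.2
  have hG : ∀ ψ : K.extremePoints ℝ, ∃ ζ : K', ↑ζ ∈ extremePoints ℝ K' ∧
      ∀ g : {g : K' → ℝ // MemAc K' g},
        g.1 ζ = (Ψ g).1 ⟨(ψ : E), extremePoints_subset ψ.2⟩ := by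
    intro ψ
    exact S2.eval_point hK'ne hK'cp hKne hKcp Ψ hbijΨ hpreΨ honeΨ hK'cv hKcv
      (ψ' := ⟨(ψ : E), extremePoints_subset ψ.2⟩) ψ.2
  choose B hBext hBeval using hB
  choose G hGext hGeval using hG
  have hGB : ∀ ψ : K.extremePoints ℝ,
      B ⟨↑(G ψ), hGext ψ⟩ = (⟨(ψ : E), extremePoints_subset ψ.2⟩ : K) := by
    intro ψ
    apply S2.separation hKcp hKne
    intro f
    apply le_of_eq
    have h1 := hBeval ⟨↑(G ψ), hGext ψ⟩ f
    have h2 := hGeval ψ (Φ f)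
    rw [psi_phi] at h2
    rw [h1]
    have h3 : (⟨(↑(⟨↑(G ψ), hGext ψ⟩ : K'.extremePoints ℝ) : E'),
        extremePoints_subset (⟨↑(G ψ), hGext ψ⟩ : K'.extremePoints ℝ).2⟩ : K') = G ψ :=
      Subtype.ext rfl
    rw [h3, ← h2]
  have hBG : ∀ ψ' : K'.extremePoints ℝ,
      G ⟨↑(B ψ'), hBext ψ'⟩ = (⟨(ψ' : E'), extremePoints_subset ψ'.2⟩ : K') := by
    intro ψ'
    apply S2.separation hK'cp hK'ne
    intro g
    apply le_of_eq
    have h1 := hGeval ⟨↑(B ψ'), hBext ψ'⟩ g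
    have h2 := hBeval ψ' (Ψ g)
    rw [phi_psi] at h2
    rw [h1]
    have h3 : (⟨(↑(⟨↑(B ψ'), hBext ψ'⟩ : K.extremePoints ℝ) : E),
        extremePoints_subset (⟨↑(B ψ'), hBext ψ'⟩ : K.extremePoints ℝ).2⟩ : K) = B ψ' :=
      Subtype.ext rfl
    rw [h3, h2]
  refine ⟨⟨fun ψ => ⟨↑(G ψ), hGext ψ⟩, fun ψ' => ⟨↑(B ψ'), hBext ψ'⟩, ?_, ?_⟩, ?_, ?_⟩
  · intro ψ
    apply Subtype.ext
    show (↑(B ⟨↑(G ψ), hGext ψ⟩) : E) = ↑ψ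
    rw [hGB ψ]
  · intro ψ'
    apply Subtype.ext
    show (↑(G ⟨↑(B ψ'), hBext ψ'⟩) : E') = ↑ψ'
    rw [hBG ψ']
  · intro f ψ'
    exact (hBeval ψ' f).symm
  · intro g f ψ hfg
    have h1 := hGeval ψ g
    have h2 : Ψ g = f := by rw [← hfg, psi_phi]
    rw [h2] at h1
    exact h1.symm
end
end

section
/- Let K be a nonempty compact convex set and ψ ∈ ∂_e K. Then p_ψ(ψ) = 1, and p_ψ(ρ) = 0 for every ρ ∈ ∂_e K with ρ ≠ ψ, where p_ψ(x) = inf{h(x) : h ∈ A_usc(K), h(ψ) = 1}. -/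
open Set

noncomputable section

/-- Membership in `A_usc(K)`: upper semicontinuous affine functions `K → [0,∞)`. -/
def MemAusc {E : Type*} [AddCommGroup E] [Module ℝ E] [TopologicalSpace E]
    (K : Set E) (f : K → ℝ) : Prop :=
  UpperSemicontinuous f ∧ IsAffineOn K f ∧ ∀ x : K, 0 ≤ f x

/-- `p_ψ(x) = inf {h(x) : h ∈ A_usc(K), h(ψ) = 1}`. -/
def pPsi {E : Type*} [AddCommGroup E] [Module ℝ E] [TopologicalSpace E]
    (K : Set E) (ψ : E) (hψ : ψ ∈ K) (x : K) : ℝ :=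
  sInf {r : ℝ | ∃ h : K → ℝ, MemAusc K h ∧ h ⟨ψ, hψ⟩ = 1 ∧ h x = r}

/-- The constant function `1` is in `A_usc(K)`. -/
lemma memAusc_one {E : Type*} [AddCommGroup E] [Module ℝ E] [TopologicalSpace E]
    (K : Set E) : MemAusc K (fun _ => (1 : ℝ)) :=
  ⟨continuous_const.upperSemicontinuous, fun _ _ t _ _ _ => by ring, fun _ => zero_le_one⟩

/-- Key separation lemma: if `ρ ∈ ∂ₑK`, `ρ ≠ ψ`, then for every `δ > 0` there is a
continuous affine `h ≥ 0` with `h ψ = 1` and `h ρ < δ`. -/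
lemma exists_memAusc_lt {E : Type*}
    [AddCommGroup E] [Module ℝ E] [TopologicalSpace E] [IsTopologicalAddGroup E]
    [ContinuousSMul ℝ E] [T2Space E] [LocallyConvexSpace ℝ E]
    (K : Set E) (hKcp : IsCompact K) (hKcv : Convex ℝ K)
    {ψ : E} (hψK : ψ ∈ K) {ρ : E} (hρ : ρ ∈ K.extremePoints ℝ) (hne : ρ ≠ ψ)
    {δ : ℝ} (hδ : 0 < δ) :
    ∃ h : K → ℝ, MemAusc K h ∧ h ⟨ψ, hψK⟩ = 1 ∧
      h ⟨ρ, extremePoints_subset hρ⟩ < δ := by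
  have hρK : ρ ∈ K := extremePoints_subset hρ
  set b : E × ℝ := (ψ, 1) with hb
  set S : Set (E × ℝ) := K ×ˢ ({0} : Set ℝ) with hS
  set C : Set (E × ℝ) := convexJoin ℝ S {b} with hC
  -- C is compact (hence closed) and convex
  have himg : C = (fun p : (E × ℝ) × ℝ => (1 - p.2) • p.1 + p.2 • b) '' (S ×ˢ Icc (0:ℝ) 1) := by
    ext z
    constructor
    · intro hz
      rw [hC, mem_convexJoin] at hz
      obtain ⟨a, haS, c, hc, hseg⟩ := hz
      rw [mem_singleton_iff] at hc
      subst hc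
      rw [segment_eq_image] at hseg
      obtain ⟨θ, hθ, rfl⟩ := hseg
      exact ⟨(a, θ), ⟨haS, hθ⟩, rfl⟩
    · rintro ⟨⟨a, θ⟩, ⟨haS, hθ⟩, rfl⟩
      rw [hC, mem_convexJoin]
      refine ⟨a, haS, b, mem_singleton _, ?_⟩
      rw [segment_eq_image]
      exact ⟨θ, hθ, rfl⟩
  have hScp : IsCompact S := hKcp.prod isCompact_singleton
  have hCcp : IsCompact C := by
    rw [himg]
    exact (hScp.prod isCompact_Icc).image (by fun_prop)
  have hCcl : IsClosed C := hCcp.isClosed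
  have hCcv : Convex ℝ C :=
    Convex.convexJoin (hKcv.prod (convex_singleton 0)) (convex_singleton b)
  -- (ρ, δ) ∉ C
  have hnot : ((ρ, δ) : E × ℝ) ∉ C := by
    intro hmem
    rw [hC, mem_convexJoin] at hmem
    obtain ⟨a, haS, c, hc, hseg⟩ := hmem
    rw [mem_singleton_iff] at hc
    subst hc
    obtain ⟨haK, ha2⟩ := haS
    rw [mem_singleton_iff] at ha2
    obtain ⟨u, v, hu, hv, huv, heq⟩ := hseg
    have h2 : u * a.2 + v * 1 = δ := congrArg Prod.snd heq
    have h1 : u • a.1 + v • ψ = ρ := congrArg Prod.fst heq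
    rw [ha2, mul_zero, zero_add, mul_one] at h2
    subst h2
    -- v = δ, u = 1 - δ
    rcases eq_or_lt_of_le hu with hu0 | hu0
    · -- u = 0, so ρ = ψ
      rw [← hu0, zero_smul, zero_add] at h1
      have : v = 1 := by linarith
      rw [this, one_smul] at h1
      exact hne h1.symm
    · -- 0 < u, 0 < v : ρ in open segment
      have hρo : ρ ∈ openSegment ℝ a.1 ψ := ⟨u, v, hu0, hδ, huv, h1⟩
      rw [mem_extremePoints] at hρ
      have := hρ.2 a.1 haK ψ hψK hρo
      exact hne this.2.symm
  -- separate
  obtain ⟨f, u, hfu, hux⟩ := geometric_hahn_banach_closed_point hCcv hCcl hnot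
  have hSC : S ⊆ C := subset_convexJoin_left ⟨b, mem_singleton _⟩
  have hK0 : ∀ x ∈ K, f (x, (0:ℝ)) < u := fun x hx => hfu _ (hSC ⟨hx, mem_singleton _⟩)
  have hSne : S.Nonempty := ⟨(ψ, 0), by simp [hS, hψK]⟩
  have hbC : b ∈ C := subset_convexJoin_right hSne (mem_singleton _)
  have hfb : f b < u := hfu _ hbC
  set r : ℝ := f ((0:E), (1:ℝ)) with hr
  have hsplit : ∀ (x : E) (t : ℝ), f (x, t) = f (x, 0) + t * r := by
    intro x t
    have : ((x, t) : E × ℝ) = (x, 0) + t • ((0:E), (1:ℝ)) := by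
      simp [Prod.ext_iff]
    rw [this, map_add, map_smul, smul_eq_mul]
  have hfρδ : f (ρ, δ) = f (ρ, 0) + δ * r := hsplit ρ δ
  have hfρ : f (ρ, (0:ℝ)) < u := hK0 ρ hρK
  have hrpos : 0 < r := by
    nlinarith [hux, hfρδ, hfρ]
  have hfψ1 : f (ψ, (1:ℝ)) = f (ψ, 0) + r := by simpa using hsplit ψ 1
  set A : ℝ := f (ρ, 0) + δ * r with hA
  have hAu : u < A := by rw [← hfρδ]; exact hux
  set den : ℝ := A - f (ψ, (0:ℝ)) with hden
  have hdenr : r < den := by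
    have : f (ψ, 0) + r < u := by rw [← hfψ1]; exact hfb
    simp only [hden]
    linarith
  have hdenpos : 0 < den := lt_trans hrpos hdenr
  refine ⟨fun x => (A - f ((x : E), 0)) / den, ⟨?_, ?_, ?_⟩, ?_, ?_⟩
  · -- usc
    apply Continuous.upperSemicontinuous
    fun_prop
  · -- affine
    intro x y t ht ht1 hm
    have hfc : f ((t • (x : E) + (1 - t) • (y : E), (0:ℝ))) =
        t * f ((x : E), 0) + (1 - t) * f ((y : E), 0) := by
      have : ((t • (x : E) + (1 - t) • (y : E), (0:ℝ)) : E × ℝ) =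
          t • (((x : E), (0:ℝ)) : E × ℝ) + (1 - t) • (((y : E), (0:ℝ)) : E × ℝ) := by
        simp [Prod.ext_iff, Prod.smul_def]
      rw [this, map_add, map_smul, map_smul, smul_eq_mul, smul_eq_mul]
    simp only [hfc]
    field_simp
    ring
  · -- nonneg
    intro x
    have : f ((x : E), (0:ℝ)) < u := hK0 _ x.2
    have : 0 < A - f ((x : E), 0) := by linarith
    positivity
  · -- value at ψ
    simp only
    rw [← hden, div_self (ne_of_gt hdenpos)]
  · -- value at ρ
    simp only
    have hnum : A - f (ρ, (0:ℝ)) = δ * r := by rw [hA]; ring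
    rw [hnum, div_lt_iff₀ hdenpos]
    nlinarith

theorem statement8
    {E : Type*}
    [AddCommGroup E] [Module ℝ E] [TopologicalSpace E] [IsTopologicalAddGroup E]
    [ContinuousSMul ℝ E] [T2Space E] [LocallyConvexSpace ℝ E]
    (K : Set E) (hKne : K.Nonempty) (hKcp : IsCompact K) (hKcv : Convex ℝ K)
    (ψ : E) (hψ : ψ ∈ K.extremePoints ℝ) :
    pPsi K ψ (extremePoints_subset hψ) ⟨ψ, extremePoints_subset hψ⟩ = 1 ∧
    ∀ (ρ : E) (hρ : ρ ∈ K.extremePoints ℝ), ρ ≠ ψ →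
      pPsi K ψ (extremePoints_subset hψ) ⟨ρ, extremePoints_subset hρ⟩ = 0 := by
  have hψK : ψ ∈ K := extremePoints_subset hψ
  constructor
  · -- p_ψ(ψ) = 1
    have : {r : ℝ | ∃ h : K → ℝ, MemAusc K h ∧ h ⟨ψ, hψK⟩ = 1 ∧ h ⟨ψ, hψK⟩ = r} = {1} := by
      ext s
      simp only [mem_setOf_eq, mem_singleton_iff]
      constructor
      · rintro ⟨h, _, h1, hs⟩
        rw [← hs, h1]
      · rintro rfl
        exact ⟨fun _ => 1, memAusc_one K, rfl, rfl⟩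
    rw [pPsi, this, csInf_singleton]
  · intro ρ hρ hne
    have hρK : ρ ∈ K := extremePoints_subset hρ
    set T : Set ℝ :=
      {r : ℝ | ∃ h : K → ℝ, MemAusc K h ∧ h ⟨ψ, hψK⟩ = 1 ∧ h ⟨ρ, hρK⟩ = r} with hT
    have hTne : T.Nonempty := ⟨1, fun _ => 1, memAusc_one K, rfl, rfl⟩
    have hT0 : ∀ s ∈ T, (0:ℝ) ≤ s := by
      rintro s ⟨h, hm, _, rfl⟩
      exact hm.2.2 _
    have hbdd : BddBelow T := ⟨0, hT0⟩
    have hge : 0 ≤ sInf T := le_csInf hTne hT0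
    have hle : sInf T ≤ 0 := by
      by_contra hlt
      push_neg at hlt
      obtain ⟨h, hm, h1, hlt'⟩ :=
        exists_memAusc_lt K hKcp hKcv hψK hρ hne hlt
      have : sInf T ≤ h ⟨ρ, hρK⟩ := csInf_le hbdd ⟨h, hm, h1, rfl⟩
      linarith
    exact le_antisymm hle hge
end
end

section
/- Let K be a nonempty compact convex set and let h, h' ∈ A_usc(K). If h(ψ) ≤ h'(ψ) for every ψ ∈ ∂_e K, then h(x) ≤ h'(x) for every x ∈ K. -/
open Set

noncomputable section

/-- An usc real function on a nonempty compact space attains its maximum. -/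
lemma usc_exists_max {X : Type*} [TopologicalSpace X] [CompactSpace X] [Nonempty X]
    {f : X → ℝ} (hf : UpperSemicontinuous f) : ∃ z, ∀ x, f x ≤ f z := by
  by_contra hc
  push_neg at hc
  have cover : (univ : Set X) ⊆ ⋃ x : X, f ⁻¹' Iio (f x) := by
    intro y _
    obtain ⟨x, hx⟩ := hc y
    exact mem_iUnion.2 ⟨x, hx⟩
  obtain ⟨s, hs⟩ := isCompact_univ.elim_finite_subcover (fun x : X => f ⁻¹' Iio (f x))
    (fun x => hf.isOpen_preimage (f x)) cover
  have hsne : s.Nonempty := by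
    obtain ⟨y⟩ : Nonempty X := inferInstance
    obtain ⟨x, hx, _⟩ := mem_iUnion₂.1 (hs (mem_univ y))
    exact ⟨x, hx⟩
  obtain ⟨z, hz, hzmax⟩ := s.exists_max_image f hsne
  obtain ⟨x, hx, hlt⟩ := mem_iUnion₂.1 (hs (mem_univ z))
  exact absurd (hzmax x hx) (not_le.2 hlt)

/-- Bauer maximum principle for usc affine functions: if `g ≤ 0` on extreme points
then `g ≤ 0` everywhere. -/
lemma bauer_usc_affine {E : Type*}
    [AddCommGroup E] [Module ℝ E] [TopologicalSpace E] [IsTopologicalAddGroup E]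
    [ContinuousSMul ℝ E] [T2Space E] [LocallyConvexSpace ℝ E]
    (K : Set E) (hKne : K.Nonempty) (hKcp : IsCompact K) (hKcv : Convex ℝ K)
    (g : K → ℝ) (hg_usc : UpperSemicontinuous g) (hg_aff : IsAffineOn K g)
    (hg_ext : ∀ x : K, (x : E) ∈ K.extremePoints ℝ → g x ≤ 0) :
    ∀ x : K, g x ≤ 0 := by
  haveI : CompactSpace K := isCompact_iff_compactSpace.1 hKcp
  haveI : Nonempty K := hKne.to_subtype
  obtain ⟨z₀, hz₀⟩ := usc_exists_max hg_usc
  set M := g z₀ with hM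
  suffices hM0 : M ≤ 0 by intro x; exact (hz₀ x).trans hM0
  set F : Set E := Subtype.val '' {x : K | M ≤ g x} with hF
  have hmemF : ∀ y : K, (y : E) ∈ F ↔ g y = M := by
    intro y
    constructor
    · rintro ⟨x, hx, hxy⟩
      have : x = y := Subtype.ext hxy
      exact le_antisymm (hz₀ y) (this ▸ hx)
    · intro hy; exact ⟨y, le_of_eq hy.symm, rfl⟩
  have hFK : F ⊆ K := by rintro _ ⟨x, _, rfl⟩; exact x.2
  have hFne : F.Nonempty := ⟨z₀, z₀, le_refl M, rfl⟩
  have hFcp : IsCompact F := by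
    have hclosed : IsClosed {x : K | M ≤ g x} := hg_usc.isClosed_preimage M
    exact (hclosed.isCompact).image continuous_subtype_val
  have hFcv : Convex ℝ F := by
    rintro _ ⟨x, hx, rfl⟩ _ ⟨y, hy, rfl⟩ a b ha hb hab
    have hb' : b = 1 - a := by linarith
    subst hb'
    have hmem : a • (x : E) + (1 - a) • (y : E) ∈ K :=
      hKcv x.2 y.2 ha hb hab
    refine ⟨⟨_, hmem⟩, ?_, rfl⟩
    have := hg_aff x y a ha (by linarith) hmem
    simp only [mem_setOf_eq] at hx hy ⊢
    have hx' : g x = M := le_antisymm (hz₀ x) hx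
    have hy' : g y = M := le_antisymm (hz₀ y) hy
    rw [this, hx', hy']; ring_nf; exact le_refl M
  have hext : IsExtreme ℝ K F := by
    refine ⟨hFK, ?_⟩
    rintro x₁ hx₁ x₂ hx₂ x hxF hxseg
    obtain ⟨a, b, ha, hb, hab, hx⟩ := hxseg
    have hb' : b = 1 - a := by linarith
    subst hb'
    have hmem : a • x₁ + (1 - a) • x₂ ∈ K := hKcv hx₁ hx₂ ha.le hb.le hab
    have heq := hg_aff ⟨x₁, hx₁⟩ ⟨x₂, hx₂⟩ a ha.le (by linarith) hmem
    have hxM : g ⟨a • x₁ + (1 - a) • x₂, hmem⟩ = M :=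
      (hmemF ⟨a • x₁ + (1 - a) • x₂, hmem⟩).1
        (show (a • x₁ + (1 - a) • x₂ : E) ∈ F by rw [hx]; exact hxF)
    have h1 : g ⟨x₁, hx₁⟩ ≤ M := hz₀ _
    have h2 : g ⟨x₂, hx₂⟩ ≤ M := hz₀ _
    have h1' : g ⟨x₁, hx₁⟩ = M := by nlinarith [heq, hxM]
    have h2' : g ⟨x₂, hx₂⟩ = M := by nlinarith [heq, hxM]
    exact (hmemF ⟨x₁, hx₁⟩).2 h1'
  obtain ⟨z, hz⟩ := hFcp.extremePoints_nonempty hFne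
  have hzK : z ∈ K.extremePoints ℝ := hext.extremePoints_subset_extremePoints hz
  have hzF : z ∈ F := hz.1
  obtain ⟨zz, hzz, rfl⟩ := hzF
  have : g zz = M := (hmemF zz).1 ⟨zz, hzz, rfl⟩
  rw [← this]
  exact hg_ext zz hzK

/-- Any usc nonnegative affine function on a compact convex set is, at any point,
approximated from above by restrictions of continuous affine functions on `E`
that dominate it on all of `K`. -/
lemma exists_affine_majorant {E : Type*}
    [AddCommGroup E] [Module ℝ E] [TopologicalSpace E] [IsTopologicalAddGroup E]
    [ContinuousSMul ℝ E] [T2Space E] [LocallyConvexSpace ℝ E]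
    (K : Set E) (hKcp : IsCompact K) (hKcv : Convex ℝ K)
    (h' : K → ℝ) (husc : UpperSemicontinuous h') (haff : IsAffineOn K h')
    (hpos : ∀ x : K, 0 ≤ h' x)
    (x0 : K) {ε : ℝ} (hε : 0 < ε) :
    ∃ a : E → ℝ, (∀ x y : E, ∀ t : ℝ, a (t • x + (1 - t) • y) = t * a x + (1 - t) * a y) ∧
      Continuous a ∧ (∀ x : K, h' x ≤ a x) ∧ a x0 ≤ h' x0 + ε := by
  set Hyp : Set (E × ℝ) := {p | ∃ hx : p.1 ∈ K, 0 ≤ p.2 ∧ p.2 ≤ h' ⟨p.1, hx⟩} with hHyp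
  have hconv : Convex ℝ Hyp := by
    rintro ⟨x₁, t₁⟩ ⟨hx₁, ht₁0, ht₁⟩ ⟨x₂, t₂⟩ ⟨hx₂, ht₂0, ht₂⟩ a b ha hb hab
    have hb' : b = 1 - a := by linarith
    subst hb'
    have hmem : a • x₁ + (1 - a) • x₂ ∈ K := hKcv hx₁ hx₂ ha hb hab
    refine ⟨hmem, ?_, ?_⟩
    · simp only [Prod.smul_mk, Prod.mk_add_mk, smul_eq_mul]
      positivity
    · simp only [Prod.smul_mk, Prod.mk_add_mk, smul_eq_mul]
      have := haff ⟨x₁, hx₁⟩ ⟨x₂, hx₂⟩ a ha (by linarith) hmem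
      calc a * t₁ + (1 - a) * t₂ ≤ a * h' ⟨x₁, hx₁⟩ + (1 - a) * h' ⟨x₂, hx₂⟩ := by
            apply add_le_add <;> apply mul_le_mul_of_nonneg_left <;> assumption
        _ = h' ⟨a • x₁ + (1 - a) • x₂, hmem⟩ := this.symm
  have hclosed : IsClosed Hyp := by
    rw [← isOpen_compl_iff]
    rw [isOpen_iff_mem_nhds]
    rintro ⟨x, t⟩ hp
    by_cases hxK : x ∈ K
    · by_cases ht0 : 0 ≤ t
      · have hgt : h' ⟨x, hxK⟩ < t := by
          by_contra hle
          exact hp ⟨hxK, ht0, not_lt.1 hle⟩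
        obtain ⟨c, hc1, hc2⟩ := exists_between hgt
        have := husc ⟨x, hxK⟩ c hc1
        rw [nhds_subtype_eq_comap, Filter.eventually_comap] at this
        obtain ⟨V, hV, hVsub⟩ := this.exists_mem
        obtain ⟨W, hWV, hWopen, hxW⟩ := mem_nhds_iff.1 hV
        have : W ×ˢ Ioi c ∈ nhds (x, t) :=
          prod_mem_nhds (hWopen.mem_nhds hxW) (Ioi_mem_nhds hc2)
        filter_upwards [this]
        rintro ⟨y, s⟩ ⟨hyW, hs⟩ ⟨hyK, hs0, hsle⟩
        have : h' ⟨y, hyK⟩ < c := hVsub y (hWV hyW) ⟨y, hyK⟩ rfl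
        simp only [mem_Ioi] at hs
        linarith
      · have : (univ : Set E) ×ˢ Iio (0 : ℝ) ∈ nhds (x, t) :=
          prod_mem_nhds Filter.univ_mem (Iio_mem_nhds (not_le.1 ht0))
        filter_upwards [this]
        rintro ⟨y, s⟩ ⟨-, hs⟩ ⟨hyK, hs0, -⟩
        simp only [mem_Iio] at hs
        linarith
    · have : Kᶜ ×ˢ (univ : Set ℝ) ∈ nhds (x, t) :=
        prod_mem_nhds ((hKcp.isClosed.isOpen_compl).mem_nhds hxK) Filter.univ_mem
      filter_upwards [this]
      rintro ⟨y, s⟩ ⟨hy, -⟩ ⟨hyK, -, -⟩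
      exact hy hyK
  have hpnot : ((x0 : E), h' x0 + ε) ∉ Hyp := by
    rintro ⟨hx, -, hle⟩
    have : (⟨(x0 : E), hx⟩ : K) = x0 := Subtype.ext rfl
    rw [this] at hle
    simp only at hle
    linarith
  obtain ⟨f, u, hfu, hfb⟩ := geometric_hahn_banach_point_closed hconv hclosed hpnot
  set g : E → ℝ := fun x => f (x, 0) with hg
  set c : ℝ := f (0, 1) with hc
  have hft : ∀ (x : E) (t : ℝ), f (x, t) = g x + t * c := by
    intro x t
    have : (x, t) = (x, (0 : ℝ)) + t • ((0 : E), (1 : ℝ)) := by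
      simp [Prod.ext_iff]
    rw [this, map_add, map_smul]
    simp [hg, hc]
  have hcneg : c < 0 := by
    have h1 : u < f ((x0 : E), h' x0) := hfb _ ⟨x0.2, hpos x0, by simp⟩
    rw [hft] at h1 hfu
    nlinarith
  refine ⟨fun x => (u - g x) / c, ?_, ?_, ?_, ?_⟩
  · intro x y t
    have hgaff : g (t • x + (1 - t) • y) = t * g x + (1 - t) * g y := by
      simp only [hg]
      have : ((t • x + (1 - t) • y, (0:ℝ)) : E × ℝ)
          = t • (x, (0:ℝ)) + (1 - t) • (y, (0:ℝ)) := by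
        simp [Prod.ext_iff]
      rw [this, map_add, map_smul, map_smul]
      simp
    show (u - g (t • x + (1 - t) • y)) / c = t * ((u - g x) / c) + (1 - t) * ((u - g y) / c)
    rw [hgaff]
    field_simp
    ring
  · exact (continuous_const.sub
      (f.continuous.comp (continuous_id.prodMk continuous_const))).div_const c
  · intro x
    have := hfb ((x : E), h' x) ⟨x.2, hpos x, by simp⟩
    rw [hft] at this
    show h' x ≤ (u - g ↑x) / c
    rw [le_div_iff_of_neg hcneg]
    nlinarith
  · rw [hft] at hfu
    show (u - g ↑x0) / c ≤ h' x0 + ε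
    rw [div_le_iff_of_neg hcneg]
    nlinarith

theorem statement10
    {E : Type*}
    [AddCommGroup E] [Module ℝ E] [TopologicalSpace E] [IsTopologicalAddGroup E]
    [ContinuousSMul ℝ E] [T2Space E] [LocallyConvexSpace ℝ E]
    (K : Set E) (hKne : K.Nonempty) (hKcp : IsCompact K) (hKcv : Convex ℝ K)
    (h h' : K → ℝ) (hm : MemAusc K h) (hm' : MemAusc K h')
    (hbd : ∀ x : K, (x : E) ∈ K.extremePoints ℝ → h x ≤ h' x) :
    ∀ x : K, h x ≤ h' x := by
  intro x0
  by_contra hcon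
  push_neg at hcon
  set ε : ℝ := (h x0 - h' x0) / 2 with hεdef
  have hε : 0 < ε := by simp only [hεdef]; linarith
  obtain ⟨a, haff, hacont, hage, hax0⟩ :=
    exists_affine_majorant K hKcp hKcv h' hm'.1 hm'.2.1 hm'.2.2 x0 hε
  set g₂ : K → ℝ := fun x => h x + (-(a ↑x)) with hg₂
  have husc2 : UpperSemicontinuous g₂ :=
    hm.1.add ((hacont.comp continuous_subtype_val).neg.upperSemicontinuous)
  have haff2 : IsAffineOn K g₂ := by
    intro x y t ht0 ht1 hmem
    show h ⟨_, hmem⟩ + (-(a (t • (x : E) + (1 - t) • (y : E)))) = _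
    rw [hm.2.1 x y t ht0 ht1 hmem, haff (x : E) (y : E) t]
    show _ = t * (h x + (-(a ↑x))) + (1 - t) * (h y + (-(a ↑y)))
    ring
  have hext2 : ∀ z : K, (z : E) ∈ K.extremePoints ℝ → g₂ z ≤ 0 := by
    intro z hz
    have h1 : h z ≤ h' z := hbd z hz
    have h2 : h' z ≤ a z := hage z
    show h z + (-(a ↑z)) ≤ 0
    linarith
  have := bauer_usc_affine K hKne hKcp hKcv g₂ husc2 haff2 hext2 x0
  have hx0 : h x0 + (-(a ↑x0)) ≤ 0 := this
  simp only [hεdef] at hax0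
  linarith
end
end

section
/- Let K be a nonempty compact convex set, g ∈ A_usc(K) and ψ ∈ ∂_e K. Then sup{λ ∈ [0,∞) : λ·p_ψ(x) ≤ g(x) for all x ∈ K} = g(ψ), i.e. the extended gauge m(g, p_ψ) equals g(ψ), where p_ψ(x) = inf{h(x) : h ∈ A_usc(K), h(ψ) = 1}. -/
open Set

noncomputable section

lemma pPsi_at_psi {E : Type*} [AddCommGroup E] [Module ℝ E] [TopologicalSpace E]
    (K : Set E) (ψ : E) (hψ : ψ ∈ K) : pPsi K ψ hψ ⟨ψ, hψ⟩ = 1 := by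
  have : {r : ℝ | ∃ h : K → ℝ, MemAusc K h ∧ h ⟨ψ, hψ⟩ = 1 ∧ h ⟨ψ, hψ⟩ = r} = {1} := by
    ext r
    constructor
    · rintro ⟨h, _, h1, rfl⟩; exact h1
    · rintro rfl; exact ⟨fun _ => 1, memAusc_one K, rfl, rfl⟩
  rw [pPsi, this, csInf_singleton]

theorem statement11
    {E : Type*}
    [AddCommGroup E] [Module ℝ E] [TopologicalSpace E] [IsTopologicalAddGroup E]
    [ContinuousSMul ℝ E] [T2Space E] [LocallyConvexSpace ℝ E]
    (K : Set E) (hKne : K.Nonempty) (hKcp : IsCompact K) (hKcv : Convex ℝ K)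
    (g : K → ℝ) (hg : MemAusc K g)
    (ψ : E) (hψ : ψ ∈ K.extremePoints ℝ) :
    sSup {l : ℝ | 0 ≤ l ∧
        ∀ x : K, l * pPsi K ψ (extremePoints_subset hψ) x ≤ g x}
      = g ⟨ψ, extremePoints_subset hψ⟩ := by
  obtain ⟨hgu, hga, hgn⟩ := hg
  set ψ' : K := ⟨ψ, extremePoints_subset hψ⟩
  have hpψ : pPsi K ψ (extremePoints_subset hψ) ψ' = 1 :=
    pPsi_at_psi K ψ (extremePoints_subset hψ)
  -- g ψ' belongs to the set
  have hmem : g ψ' ∈ {l : ℝ | 0 ≤ l ∧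
      ∀ x : K, l * pPsi K ψ (extremePoints_subset hψ) x ≤ g x} := by
    refine ⟨hgn ψ', fun x => ?_⟩
    rcases eq_or_lt_of_le (hgn ψ') with h0 | hpos
    · rw [← h0, zero_mul]; exact hgn x
    · -- p x ≤ g x / g ψ'
      have hbdd : BddBelow {r : ℝ | ∃ h : K → ℝ, MemAusc K h ∧ h ψ' = 1 ∧ h x = r} := by
        refine ⟨0, ?_⟩
        rintro r ⟨h, hh, _, rfl⟩
        exact hh.2.2 x
      have hmem' : g x / g ψ' ∈
          {r : ℝ | ∃ h : K → ℝ, MemAusc K h ∧ h ψ' = 1 ∧ h x = r} := by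
        refine ⟨fun z => g z / g ψ', ⟨?_, ?_, ?_⟩, ?_, rfl⟩
        · intro z y hy
          have hy' : g z / g ψ' < y := hy
          have h1 : g z < y * g ψ' := (div_lt_iff₀ hpos).mp hy'
          filter_upwards [hgu z (y * g ψ') h1] with w hw
          show g w / g ψ' < y
          exact (div_lt_iff₀ hpos).mpr hw
        · intro a b t ht0 ht1 hmem
          show g ⟨t • (a : E) + (1 - t) • (b : E), hmem⟩ / g ψ' = _
          rw [hga a b t ht0 ht1 hmem]; ring
        · intro z; exact div_nonneg (hgn z) (le_of_lt hpos)
        · exact div_self (ne_of_gt hpos)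
      have := csInf_le hbdd hmem'
      rw [pPsi] at *
      calc g ψ' * sInf {r : ℝ | ∃ h : K → ℝ, MemAusc K h ∧ h ψ' = 1 ∧ h x = r}
          ≤ g ψ' * (g x / g ψ') := mul_le_mul_of_nonneg_left this (le_of_lt hpos)
        _ = g x := by field_simp
  have hub : ∀ l ∈ {l : ℝ | 0 ≤ l ∧
      ∀ x : K, l * pPsi K ψ (extremePoints_subset hψ) x ≤ g x}, l ≤ g ψ' := by
    rintro l ⟨_, hl⟩
    have := hl ψ'
    rwa [hpψ, mul_one] at this
  exact le_antisymm (csSup_le ⟨g ψ', hmem⟩ hub)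
    (le_csSup ⟨g ψ', hub⟩ hmem)
end
end

section
/- Let K be a nonempty compact convex set and let q ∈ A_lsc(K) be a normalized co-extremal vector, i.e. {f ∈ A_lsc(K) : f ≥ q pointwise} = {t·q : 1 ≤ t ≤ ∞} (with (∞·q)(x) = ∞ for all x since q > 0) and inf_{x ∈ K} q(x) = 1. Then there exists ψ ∈ ∂_e K such that q = I^∞_ψ, where I^∞_ψ(ψ) = 1 and I^∞_ψ(x) = ∞ for x ≠ ψ. -/
open Set
open scoped ENNReal Classical

noncomputable section

/-- `f : K → [0,∞]` is affine on `K` (with the convention `0 · ∞ = 0`). -/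
def IsAffineOnE {E : Type*} [AddCommGroup E] [Module ℝ E] (K : Set E) (f : K → ℝ≥0∞) : Prop :=
  ∀ (x y : K) (t : ℝ), 0 ≤ t → t ≤ 1 →
    ∀ h : t • (x : E) + (1 - t) • (y : E) ∈ K,
      f ⟨t • (x : E) + (1 - t) • (y : E), h⟩
        = ENNReal.ofReal t * f x + ENNReal.ofReal (1 - t) * f y

/-- Membership in `A_lsc(K)`: lower semicontinuous affine functions `K → (0,∞]`. -/
def MemAlsc {E : Type*} [AddCommGroup E] [Module ℝ E] [TopologicalSpace E]
    (K : Set E) (f : K → ℝ≥0∞) : Prop :=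
  LowerSemicontinuous f ∧ IsAffineOnE K f ∧ ∀ x : K, 0 < f x

/-- The function `I^∞_ψ`, equal to `1` at `ψ` and `∞` elsewhere. -/
def Iinf {E : Type*} [AddCommGroup E] [Module ℝ E]
    (K : Set E) (ψ : E) (hψ : ψ ∈ K) : K → ℝ≥0∞ :=
  fun x => if (x : E) = ψ then 1 else ∞

/-- `q` is a co-extremal vector of the cone `A_lsc(K)`. -/
def CoExtremalLsc {E : Type*} [AddCommGroup E] [Module ℝ E] [TopologicalSpace E]
    (K : Set E) (q : K → ℝ≥0∞) : Prop :=
  MemAlsc K q ∧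
    {f : K → ℝ≥0∞ | MemAlsc K f ∧ q ≤ f}
      = {f : K → ℝ≥0∞ | ∃ t : ℝ≥0∞, 1 ≤ t ∧ f = fun x => t * q x}

/-- The extended gauge `M(f,g) = inf {μ ∈ (0,∞] : f ≤ μ·g}`. -/
def MgaugeE {E : Type*} [AddCommGroup E] [Module ℝ E] {K : Set E}
    (f g : K → ℝ≥0∞) : ℝ≥0∞ :=
  sInf {m : ℝ≥0∞ | 0 < m ∧ ∀ x : K, f x ≤ m * g x}

theorem statement13
    {E : Type*}
    [AddCommGroup E] [Module ℝ E] [TopologicalSpace E] [IsTopologicalAddGroup E]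
    [ContinuousSMul ℝ E] [T2Space E] [LocallyConvexSpace ℝ E]
    (K : Set E) (hKne : K.Nonempty) (hKcp : IsCompact K) (hKcv : Convex ℝ K)
    (q : K → ℝ≥0∞) (hq : CoExtremalLsc K q)
    (hnorm : (⨅ x : K, q x) = 1) :
    ∃ (ψ : E) (hψ : ψ ∈ K.extremePoints ℝ),
      q = Iinf K ψ (extremePoints_subset hψ) := by
  classical
  obtain ⟨hqA, hset⟩ := hq
  obtain ⟨hq_lsc, hq_aff, hq_pos⟩ := hqA
  have hKne' : Nonempty K := hKne.to_subtype
  -- ofReal t + ofReal (1-t) = 1 for t ∈ [0,1]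
  have hof : ∀ t : ℝ, 0 ≤ t → t ≤ 1 →
      ENNReal.ofReal t + ENNReal.ofReal (1 - t) = 1 := by
    intro t ht0 ht1
    rw [← ENNReal.ofReal_add ht0 (by linarith)]
    norm_num
  -- Step 1: q + 1 is in the cone and ≥ q
  have hmem1 : (fun x : K => q x + 1) ∈ {f : K → ℝ≥0∞ | MemAlsc K f ∧ q ≤ f} := by
    refine ⟨⟨hq_lsc.add lowerSemicontinuous_const, ?_, ?_⟩, fun x => le_self_add⟩
    · intro x y t ht0 ht1 h
      have := hq_aff x y t ht0 ht1 h
      simp only [this]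
      have h1 := hof t ht0 ht1
      calc ENNReal.ofReal t * q x + ENNReal.ofReal (1 - t) * q y + 1
          = ENNReal.ofReal t * q x + ENNReal.ofReal (1 - t) * q y
            + (ENNReal.ofReal t + ENNReal.ofReal (1 - t)) := by rw [h1]
        _ = ENNReal.ofReal t * (q x + 1) + ENNReal.ofReal (1 - t) * (q y + 1) := by ring
    · intro x
      exact lt_of_lt_of_le (hq_pos x) le_self_add
  rw [hset] at hmem1
  obtain ⟨t, ht1, htq⟩ := hmem1
  have ht' : ∀ x : K, q x + 1 = t * q x := fun x => congrFun htq x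
  -- Step 2: some value is finite
  have hex : ∃ x : K, q x ≠ ∞ := by
    by_contra h
    push_neg at h
    have : (⨅ x : K, q x) = ∞ := iInf_eq_top.mpr h
    rw [hnorm] at this
    exact ENNReal.one_ne_top this
  obtain ⟨x₀, hx₀⟩ := hex
  -- Step 3: t is finite
  have htfin : t ≠ ∞ := by
    intro htop
    have h1 := ht' x₀
    rw [htop, ENNReal.top_mul (hq_pos x₀).ne'] at h1
    exact (ENNReal.add_lt_top.mpr ⟨hx₀.lt_top, ENNReal.one_lt_top⟩).ne h1
  -- Step 4: all finite values of q coincide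
  have hsame : ∀ x y : K, q x ≠ ∞ → q y ≠ ∞ → q x = q y := by
    intro x y hx hy
    have hax := ht' x
    have hay := ht' y
    have hx' : (q x + 1).toReal = (t * q x).toReal := by rw [hax]
    have hy' : (q y + 1).toReal = (t * q y).toReal := by rw [hay]
    rw [ENNReal.toReal_add hx ENNReal.one_ne_top, ENNReal.toReal_mul,
      ENNReal.toReal_one] at hx'
    rw [ENNReal.toReal_add hy ENNReal.one_ne_top, ENNReal.toReal_mul,
      ENNReal.toReal_one] at hy'
    set a := (q x).toReal
    set b := (q y).toReal
    set s := t.toReal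
    have hab : (a + 1) * b = (b + 1) * a := by
      rw [hx', hy']; ring
    have : a = b := by nlinarith [hab]
    exact (ENNReal.toReal_eq_toReal_iff' hx hy).mp this
  -- Step 5: the finite value is 1
  have hqx₀ : q x₀ = 1 := by
    have hge : ∀ x : K, q x₀ ≤ q x := by
      intro x
      by_cases hx : q x = ∞
      · rw [hx]; exact le_top
      · exact le_of_eq (hsame x₀ x hx₀ hx)
    have : (⨅ x : K, q x) = q x₀ := le_antisymm (iInf_le _ x₀) (le_iInf hge)
    rw [hnorm] at this
    exact this.symm
  have hdich : ∀ x : K, q x = 1 ∨ q x = ∞ := by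
    intro x
    by_cases hx : q x = ∞
    · exact Or.inr hx
    · exact Or.inl ((hsame x x₀ hx hx₀).trans hqx₀)
  -- Step 6: uniqueness of the point where q = 1
  have huniq : ∀ x y : K, q x = 1 → q y = 1 → (x : E) = (y : E) := by
    intro x y hx1 hy1
    by_contra hne
    obtain ⟨ℓ, hℓ⟩ := geometric_hahn_banach_point_point hne
    obtain ⟨z, hzK, hzmin⟩ := hKcp.exists_isMinOn hKne ℓ.continuous.continuousOn
    set g : K → ℝ≥0∞ := fun w => ENNReal.ofReal (ℓ (w : E) - ℓ z + 1) with hg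
    have hgnn : ∀ w : K, 0 ≤ ℓ (w : E) - ℓ z + 1 := by
      intro w
      have := hzmin w.2
      simp only [Set.mem_setOf_eq] at this
      linarith [this]
    have hmemf : (fun w : K => q w + g w) ∈ {f : K → ℝ≥0∞ | MemAlsc K f ∧ q ≤ f} := by
      refine ⟨⟨?_, ?_, ?_⟩, fun w => le_self_add⟩
      · refine hq_lsc.add (Continuous.lowerSemicontinuous ?_)
        exact ENNReal.continuous_ofReal.comp
          (((ℓ.continuous.comp continuous_subtype_val).sub continuous_const).add
            continuous_const)
      · intro x' y' s hs0 hs1 h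
        have e1 := hq_aff x' y' s hs0 hs1 h
        have e2 : ℓ (s • (x' : E) + (1 - s) • (y' : E)) - ℓ z + 1
            = s * (ℓ (x' : E) - ℓ z + 1) + (1 - s) * (ℓ (y' : E) - ℓ z + 1) := by
          simp only [map_add, map_smul, smul_eq_mul]
          ring
        have e3 : g ⟨s • (x' : E) + (1 - s) • (y' : E), h⟩
            = ENNReal.ofReal s * g x' + ENNReal.ofReal (1 - s) * g y' := by
          simp only [hg, e2]
          rw [ENNReal.ofReal_add (mul_nonneg hs0 (hgnn x')) (mul_nonneg (by linarith) (hgnn y')),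
            ENNReal.ofReal_mul hs0, ENNReal.ofReal_mul (by linarith : (0:ℝ) ≤ 1 - s)]
        simp only [e1, e3]
        ring
      · intro w
        exact lt_of_lt_of_le (hq_pos w) le_self_add
    rw [hset] at hmemf
    obtain ⟨s, hs1, hsq⟩ := hmemf
    have hx' : 1 + g x = s := by
      have := congrFun hsq x
      simp only [hx1, mul_one] at this
      exact this
    have hy' : 1 + g y = s := by
      have := congrFun hsq y
      simp only [hy1, mul_one] at this
      exact this
    have hgxy : g x = g y :=
      (ENNReal.add_right_inj ENNReal.one_ne_top).mp (hx'.trans hy'.symm)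
    have : ℓ (x : E) - ℓ z + 1 = ℓ (y : E) - ℓ z + 1 :=
      (ENNReal.ofReal_eq_ofReal_iff (hgnn x) (hgnn y)).mp hgxy
    have : ℓ (x : E) = ℓ (y : E) := by linarith
    linarith [hℓ]
  -- The point ψ
  refine ⟨(x₀ : E), ⟨x₀.2, ?_⟩, ?_⟩
  · -- extreme point
    intro x₁ hx₁ x₂ hx₂ hseg
    obtain ⟨a, b, ha, hb, hab, habψ⟩ := hseg
    have hb' : (1 : ℝ) - a = b := by linarith
    have hpt : a • ((⟨x₁, hx₁⟩ : K) : E) + (1 - a) • ((⟨x₂, hx₂⟩ : K) : E) = (x₀ : E) := by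
      rw [hb']; exact habψ
    have hmemc : a • ((⟨x₁, hx₁⟩ : K) : E) + (1 - a) • ((⟨x₂, hx₂⟩ : K) : E) ∈ K := by
      rw [hpt]; exact x₀.2
    have key := hq_aff ⟨x₁, hx₁⟩ ⟨x₂, hx₂⟩ a ha.le (by linarith) hmemc
    have heq : (⟨a • ((⟨x₁, hx₁⟩ : K) : E) + (1 - a) • ((⟨x₂, hx₂⟩ : K) : E), hmemc⟩ : K) = x₀ :=
      Subtype.ext hpt
    rw [heq, hqx₀] at key
    have hq₁ : q ⟨x₁, hx₁⟩ = 1 := by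
      rcases hdich ⟨x₁, hx₁⟩ with h | h
      · exact h
      · exfalso
        rw [h, ENNReal.mul_top (ENNReal.ofReal_pos.mpr ha).ne',
          top_add] at key
        exact ENNReal.one_ne_top key
    have hq₂ : q ⟨x₂, hx₂⟩ = 1 := by
      rcases hdich ⟨x₂, hx₂⟩ with h | h
      · exact h
      · exfalso
        rw [h, ENNReal.mul_top (ENNReal.ofReal_pos.mpr (by linarith : (0:ℝ) < 1 - a)).ne',
          add_top] at key
        exact ENNReal.one_ne_top key
    exact huniq ⟨x₁, hx₁⟩ x₀ hq₁ hqx₀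
  · -- q = Iinf
    funext x
    simp only [Iinf]
    split_ifs with h
    · have : x = x₀ := Subtype.ext h
      rw [this, hqx₀]
    · rcases hdich x with h1 | h1
      · exact absurd (huniq x x₀ h1 hqx₀) h
      · exact h1
end
end

section
/- Let K be a nonempty compact convex set. The following are equivalent: (i) A_lsc(K) is strongly co-atomic, i.e. every g ∈ A_lsc(K) is the greatest lower bound in A_lsc(K) of the set of co-extremal vectors of A_lsc(K) lying above g; (ii) every g ∈ A_lsc(K) is the greatest lower bound in A_lsc(K) of the set {M(g, I^∞_ψ)·I^∞_ψ : ψ ∈ ∂_e K}; (iii) for all g, g' ∈ A_lsc(K), one has M(g, I^∞_ψ) ≤ M(g', I^∞_ψ) for every ψ ∈ ∂_e K if and only if g ≤ g' pointwise. -/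
open Set
open scoped ENNReal Classical

noncomputable section

section Aux
variable {E : Type*} [AddCommGroup E] [Module ℝ E] [TopologicalSpace E]
  {K : Set E}

/-- `h ≤ c · I_ψ` iff `h ψ ≤ c`, provided `c > 0`. -/
lemma le_mul_Iinf_iff {h : K → ℝ≥0∞} {c : ℝ≥0∞} (hc : 0 < c) {ψ : E} (hψ : ψ ∈ K) :
    (h ≤ fun x => c * Iinf K ψ hψ x) ↔ h ⟨ψ, hψ⟩ ≤ c := by
  constructor
  · intro hle
    have := hle ⟨ψ, hψ⟩
    simpa [Iinf] using this
  · intro hle x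
    by_cases hx : (x : E) = ψ
    · have : x = ⟨ψ, hψ⟩ := Subtype.ext hx
      simp [this, Iinf, hle]
    · simp [Iinf, hx, ENNReal.mul_top hc.ne']

/-- The gauge of `g` against `I_ψ` is `g ψ`. -/
lemma MgaugeE_Iinf {g : K → ℝ≥0∞} (hg : ∀ x : K, 0 < g x) {ψ : E} (hψ : ψ ∈ K) :
    MgaugeE g (Iinf K ψ hψ) = g ⟨ψ, hψ⟩ := by
  apply le_antisymm
  · apply sInf_le
    exact ⟨hg _, (le_mul_Iinf_iff (hg _) hψ).mpr le_rfl⟩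
  · apply le_sInf
    rintro m ⟨hm, hmle⟩
    have := hmle ⟨ψ, hψ⟩
    simpa [Iinf] using this

lemma mul_Iinf_val {ψ : E} (hψK : ψ ∈ K) {d : ℝ≥0∞} (hd : 0 < d) (z : K) :
    d * Iinf K ψ hψK z = if (z : E) = ψ then d else ∞ := by
  by_cases hz : (z : E) = ψ <;> simp [Iinf, hz, ENNReal.mul_top hd.ne']

end Aux

section Aux1
variable {E : Type*} [AddCommGroup E] [Module ℝ E] [TopologicalSpace E] [T1Space E]
  {K : Set E}

lemma memAlsc_mul_Iinf {ψ : E} (hψ : ψ ∈ K.extremePoints ℝ) {d : ℝ≥0∞} (hd : 0 < d) :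
    MemAlsc K (fun x => d * Iinf K ψ (extremePoints_subset hψ) x) := by
  have hψK : ψ ∈ K := extremePoints_subset hψ
  have hval : ∀ z : K, d * Iinf K ψ (extremePoints_subset hψ) z
      = if (z : E) = ψ then d else ∞ := fun z => mul_Iinf_val hψK hd z
  refine ⟨?_, ?_, ?_⟩
  · -- lower semicontinuous
    intro x a ha
    by_cases hx : (x : E) = ψ
    · simp only [hval, if_pos hx] at ha
      refine Filter.Eventually.of_forall fun y => ?_
      simp only [hval]
      exact ha.trans_le (by split_ifs <;> simp)
    · simp only [hval, if_neg hx] at ha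
      have hU : IsOpen {y : K | ¬ (y : E) = ψ} :=
        IsOpen.preimage continuous_subtype_val isOpen_compl_singleton
      filter_upwards [hU.mem_nhds hx] with y hy
      simp only [hval, if_neg hy]
      exact ha
  · -- affine
    intro x y t ht0 ht1 hm
    simp only [hval]
    rcases eq_or_lt_of_le ht0 with h0 | h0
    · have hc : t • (x : E) + (1 - t) • (y : E) = (y : E) := by rw [← h0]; simp
      simp [hc, ← h0]
    rcases eq_or_lt_of_le ht1 with h1 | h1
    · have hc : t • (x : E) + (1 - t) • (y : E) = (x : E) := by rw [h1]; simp
      simp [hc, h1]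
    have htne : ENNReal.ofReal t ≠ 0 := (ENNReal.ofReal_pos.mpr h0).ne'
    have h1tne : ENNReal.ofReal (1 - t) ≠ 0 := (ENNReal.ofReal_pos.mpr (by linarith)).ne'
    by_cases hc : t • (x : E) + (1 - t) • (y : E) = ψ
    · obtain ⟨hxψ, hyψ⟩ := (mem_extremePoints.mp hψ).2 _ x.2 _ y.2 ⟨t, 1 - t, h0, by linarith, by ring, hc⟩
      rw [if_pos hc, if_pos hxψ, if_pos hyψ, ← add_mul,
        ← ENNReal.ofReal_add ht0 (by linarith)]
      simp
    · rw [if_neg hc]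
      by_cases hxψ : (x : E) = ψ
      · have hyψ : ¬ (y : E) = ψ := by
          intro hyψ
          apply hc
          rw [hxψ, hyψ, ← add_smul]
          simp
        rw [if_neg hyψ, ENNReal.mul_top h1tne]
        simp
      · rw [if_neg hxψ, ENNReal.mul_top htne]
        simp
  · intro z
    simp only [hval]
    split_ifs <;> simp [hd]

lemma coext_mul_Iinf {ψ : E} (hψ : ψ ∈ K.extremePoints ℝ) {c : ℝ≥0∞} (hc : 0 < c) :
    CoExtremalLsc K (fun x => c * Iinf K ψ (extremePoints_subset hψ) x) := by
  have hψK : ψ ∈ K := extremePoints_subset hψ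
  have hval : ∀ z : K, c * Iinf K ψ (extremePoints_subset hψ) z
      = if (z : E) = ψ then c else ∞ := fun z => mul_Iinf_val hψK hc z
  refine ⟨memAlsc_mul_Iinf hψ hc, ?_⟩
  ext f
  simp only [mem_setOf_eq]
  constructor
  · rintro ⟨hf, hqf⟩
    by_cases hctop : c = ∞
    · refine ⟨1, le_rfl, funext fun z => ?_⟩
      have h1 : (∞ : ℝ≥0∞) ≤ f z :=
        le_trans (by simp only [hval]; split_ifs <;> simp [hctop]) (hqf z)
      simp only [one_mul, hval]
      rw [top_le_iff.mp h1]
      split_ifs <;> simp [hctop]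
    · refine ⟨f ⟨ψ, hψK⟩ / c, ?_, funext fun z => ?_⟩
      · rw [ENNReal.le_div_iff_mul_le (Or.inl hc.ne') (Or.inl hctop), one_mul]
        have h2 := hqf ⟨ψ, hψK⟩
        simp only [hval] at h2
        simpa using h2
      · by_cases hz : (z : E) = ψ
        · have hzeq : z = ⟨ψ, hψK⟩ := Subtype.ext hz
          rw [hzeq]
          show f ⟨ψ, hψK⟩
            = f ⟨ψ, hψK⟩ / c * (c * Iinf K ψ (extremePoints_subset hψ) ⟨ψ, hψK⟩)
          have hone : c * Iinf K ψ (extremePoints_subset hψ) ⟨ψ, hψK⟩ = c := by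
            simp [Iinf]
          rw [hone, ENNReal.div_mul_cancel hc.ne' hctop]
        · have h1 : (∞ : ℝ≥0∞) ≤ f z :=
            le_trans (by simp only [hval, if_neg hz]; exact le_rfl) (hqf z)
          have ht0 : f ⟨ψ, hψK⟩ / c ≠ 0 :=
            ENNReal.div_ne_zero.mpr ⟨(hf.2.2 _).ne', hctop⟩
          simp only [hval, if_neg hz, ENNReal.mul_top ht0]
          exact top_le_iff.mp h1
  · rintro ⟨t, ht, rfl⟩
    have htc : 0 < t * c := ENNReal.mul_pos (by positivity) hc.ne'
    constructor
    · have heq : (fun x => t * (c * Iinf K ψ (extremePoints_subset hψ) x))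
          = fun x => (t * c) * Iinf K ψ (extremePoints_subset hψ) x := by
        funext x; rw [mul_assoc]
      rw [heq]
      exact memAlsc_mul_Iinf hψ htc
    · intro z
      exact le_mul_of_one_le_left (by positivity) ht

end Aux1

section Aux2
variable {E : Type*} [AddCommGroup E] [Module ℝ E] [TopologicalSpace E]
  [IsTopologicalAddGroup E] [ContinuousSMul ℝ E] [T2Space E] [LocallyConvexSpace ℝ E]
  {K : Set E}

/-- A co-extremal vector is finite in at most one point. -/
lemma coext_unique_finite (hKne : K.Nonempty) (hKcp : IsCompact K)
    {q : K → ℝ≥0∞} (hq : CoExtremalLsc K q) {x y : K} (hxy : x ≠ y)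
    (hqx : q x ≠ ∞) (hqy : q y ≠ ∞) : False := by
  have hq0x : q x ≠ 0 := (hq.1.2.2 x).ne'
  have hq0y : q y ≠ 0 := (hq.1.2.2 y).ne'
  set a : ℝ := (q x).toReal with ha_def
  set b : ℝ := (q y).toReal with hb_def
  have ha : 0 < a := ENNReal.toReal_pos hq0x hqx
  have hb : 0 < b := ENNReal.toReal_pos hq0y hqy
  have hxy' : (x : E) ≠ (y : E) := fun h => hxy (Subtype.ext h)
  obtain ⟨L, hL⟩ := SeparatingDual.exists_separating_of_ne (R := ℝ) hxy'
  obtain ⟨z0, hz0K, hz0min⟩ := hKcp.exists_isMinOn hKne L.continuous.continuousOn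
  set m : ℝ := L z0 with hm_def
  have hmin : ∀ z : K, m ≤ L z := fun z => hz0min z.2
  set C0 : ℝ := if a = b then (1 - m) - 1 else (L y * a - L x * b) / (b - a) with hC0_def
  set C : ℝ := max (1 - m) (C0 + 1) with hC_def
  have hCm : 1 - m ≤ C := le_max_left _ _
  have hCC0 : C0 + 1 ≤ C := le_max_right _ _
  have hposC : ∀ z : K, 0 < L z + C := fun z => by
    have := hmin z; linarith
  have hkey : (L x + C) * b ≠ (L y + C) * a := by
    by_cases hab : a = b
    · rw [hab]
      intro h
      exact hL (by apply add_right_cancel (b := C); exact mul_right_cancel₀ hb.ne' h)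
    · have hba : b - a ≠ 0 := fun h => hab (by linarith [sub_eq_zero.mp h])
      have hC0eq : C0 * (b - a) = L y * a - L x * b := by
        rw [hC0_def, if_neg hab, div_mul_cancel₀ _ hba]
      intro h
      have hCba : C * (b - a) = L y * a - L x * b := by ring_nf; ring_nf at h; linarith
      rcases lt_or_gt_of_ne hba with h1 | h1
      · nlinarith
      · nlinarith
  -- the competing function
  set f : K → ℝ≥0∞ := fun z => q z + ENNReal.ofReal (L z + C) with hf_def
  have hfmem : MemAlsc K f := by
    refine ⟨?_, ?_, ?_⟩
    · exact hq.1.1.add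
        (((ENNReal.continuous_ofReal.comp ((L.continuous.comp continuous_subtype_val).add
          continuous_const))).lowerSemicontinuous)
    · intro u v t ht0 ht1 hm'
      have hqaff := hq.1.2.1 u v t ht0 ht1 hm'
      show q _ + ENNReal.ofReal (L (t • (u : E) + (1 - t) • (v : E)) + C) = _
      rw [hqaff]
      have hL' : L (t • (u : E) + (1 - t) • (v : E)) + C
          = t * (L u + C) + (1 - t) * (L v + C) := by
        simp only [map_add, map_smul, smul_eq_mul]; ring
      rw [hL', ENNReal.ofReal_add (mul_nonneg ht0 (hposC u).le)
        (mul_nonneg (by linarith) (hposC v).le),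
        ENNReal.ofReal_mul ht0, ENNReal.ofReal_mul (by linarith : (0:ℝ) ≤ 1 - t)]
      ring
    · intro z
      exact lt_of_lt_of_le (hq.1.2.2 z) le_self_add
  have hfq : q ≤ f := fun z => le_self_add
  have hmem2 : f ∈ {f : K → ℝ≥0∞ | ∃ t : ℝ≥0∞, 1 ≤ t ∧ f = fun x => t * q x} := by
    rw [← hq.2]; exact ⟨hfmem, hfq⟩
  obtain ⟨t, ht1, hft⟩ := hmem2
  have hx' : q x + ENNReal.ofReal (L x + C) = t * q x := congrFun hft x
  have hy' : q y + ENNReal.ofReal (L y + C) = t * q y := congrFun hft y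
  have htne : t ≠ ∞ := by
    intro h
    rw [h, ENNReal.top_mul hq0x] at hx'
    exact (ENNReal.add_ne_top.mpr ⟨hqx, ENNReal.ofReal_ne_top⟩) hx'
  have hx'' : a + (L x + C) = t.toReal * a := by
    have h := congrArg ENNReal.toReal hx'
    rwa [ENNReal.toReal_add hqx ENNReal.ofReal_ne_top, ENNReal.toReal_mul,
      ENNReal.toReal_ofReal (hposC x).le] at h
  have hy'' : b + (L y + C) = t.toReal * b := by
    have h := congrArg ENNReal.toReal hy'
    rwa [ENNReal.toReal_add hqy ENNReal.ofReal_ne_top, ENNReal.toReal_mul,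
      ENNReal.toReal_ofReal (hposC y).le] at h
  exact hkey (by linear_combination b * hx'' - a * hy'')

/-- Any point where a co-extremal vector is finite is an extreme point of `K`. -/
lemma coext_finite_extreme (hKne : K.Nonempty) (hKcp : IsCompact K) (hKcv : Convex ℝ K)
    {q : K → ℝ≥0∞} (hq : CoExtremalLsc K q) (x : K) (hqx : q x ≠ ∞) :
    (x : E) ∈ K.extremePoints ℝ := by
  by_contra hne
  rw [mem_extremePoints] at hne
  push_neg at hne
  obtain ⟨u, hu, v, hv, hseg, hnuv⟩ := hne x.2
  obtain ⟨s, r, hs, hr, hsr, heq⟩ := hseg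
  have huv : u ≠ (x : E) ∧ v ≠ (x : E) := by
    constructor
    · intro h
      have hveq : v = (x : E) := by
        have h1 : s • (x : E) + r • v = s • (x : E) + r • (x : E) := by
          rw [← h, heq, ← add_smul, hsr, one_smul, h]
        have h2 : r • v = r • (x : E) := add_left_cancel h1
        have := congrArg (fun w => r⁻¹ • w) h2
        simpa [smul_smul, inv_mul_cancel₀ hr.ne'] using this
      exact (hnuv h hveq).elim
    · intro h
      have hueq : u = (x : E) := by
        have h1 : s • u + r • (x : E) = s • (x : E) + r • (x : E) := by
          rw [← h, heq, ← add_smul, hsr, one_smul, h]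
        have h2 : s • u = s • (x : E) := add_right_cancel h1
        have := congrArg (fun w => s⁻¹ • w) h2
        simpa [smul_smul, inv_mul_cancel₀ hs.ne'] using this
      exact (hnuv hueq h).elim
  have hqu : q ⟨u, hu⟩ = ∞ := by
    by_contra h
    exact coext_unique_finite hKne hKcp hq
      (fun he => huv.1 (congrArg Subtype.val he)) h hqx
  have hqv : q ⟨v, hv⟩ = ∞ := by
    by_contra h
    exact coext_unique_finite hKne hKcp hq
      (fun he => huv.2 (congrArg Subtype.val he)) h hqx
  have hs1 : s ≤ 1 := by linarith
  have hmem : s • u + (1 - s) • v ∈ K := by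
    have : (1 : ℝ) - s = r := by linarith
    rw [this, heq]; exact x.2
  have haff := hq.1.2.1 ⟨u, hu⟩ ⟨v, hv⟩ s hs.le hs1 hmem
  have hxeq : (⟨s • u + (1 - s) • v, hmem⟩ : K) = x := by
    apply Subtype.ext
    show s • u + (1 - s) • v = (x : E)
    have : (1 : ℝ) - s = r := by linarith
    rw [this, heq]
  rw [hxeq, hqu, hqv] at haff
  rw [ENNReal.mul_top (ENNReal.ofReal_pos.mpr hs).ne'] at haff
  simp at haff
  exact hqx haff

end Aux2

theorem statement14
    {E : Type*}
    [AddCommGroup E] [Module ℝ E] [TopologicalSpace E] [IsTopologicalAddGroup E]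
    [ContinuousSMul ℝ E] [T2Space E] [LocallyConvexSpace ℝ E]
    (K : Set E) (hKne : K.Nonempty) (hKcp : IsCompact K) (hKcv : Convex ℝ K) :
    ((∀ g : K → ℝ≥0∞, MemAlsc K g →
        (∀ q : K → ℝ≥0∞, CoExtremalLsc K q → g ≤ q → g ≤ q) ∧
        (∀ h : K → ℝ≥0∞, MemAlsc K h →
          (∀ q : K → ℝ≥0∞, CoExtremalLsc K q → g ≤ q → h ≤ q) → h ≤ g))
      ↔ (∀ g : K → ℝ≥0∞, MemAlsc K g →
        (∀ (ψ : E) (hψ : ψ ∈ K.extremePoints ℝ),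
          g ≤ fun x => MgaugeE g (Iinf K ψ (extremePoints_subset hψ))
            * Iinf K ψ (extremePoints_subset hψ) x) ∧
        (∀ h : K → ℝ≥0∞, MemAlsc K h →
          (∀ (ψ : E) (hψ : ψ ∈ K.extremePoints ℝ),
            h ≤ fun x => MgaugeE g (Iinf K ψ (extremePoints_subset hψ))
              * Iinf K ψ (extremePoints_subset hψ) x) → h ≤ g))) ∧
    ((∀ g : K → ℝ≥0∞, MemAlsc K g →
        (∀ (ψ : E) (hψ : ψ ∈ K.extremePoints ℝ),
          g ≤ fun x => MgaugeE g (Iinf K ψ (extremePoints_subset hψ))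
            * Iinf K ψ (extremePoints_subset hψ) x) ∧
        (∀ h : K → ℝ≥0∞, MemAlsc K h →
          (∀ (ψ : E) (hψ : ψ ∈ K.extremePoints ℝ),
            h ≤ fun x => MgaugeE g (Iinf K ψ (extremePoints_subset hψ))
              * Iinf K ψ (extremePoints_subset hψ) x) → h ≤ g))
      ↔ (∀ g g' : K → ℝ≥0∞, MemAlsc K g → MemAlsc K g' →
        ((∀ (ψ : E) (hψ : ψ ∈ K.extremePoints ℝ),
          MgaugeE g (Iinf K ψ (extremePoints_subset hψ))
            ≤ MgaugeE g' (Iinf K ψ (extremePoints_subset hψ))) ↔ g ≤ g'))) := by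
  constructor
  · -- (i) ↔ (ii)
    constructor
    · intro hi g hg
      constructor
      · intro ψ hψ
        rw [MgaugeE_Iinf hg.2.2 (extremePoints_subset hψ)]
        exact (le_mul_Iinf_iff (hg.2.2 _) _).mpr le_rfl
      · intro h hh hle
        refine (hi g hg).2 h hh ?_
        intro q hq hgq z
        by_cases hqz : q z = ∞
        · rw [hqz]; exact le_top
        · have hze : (z : E) ∈ K.extremePoints ℝ :=
            coext_finite_extreme hKne hKcp hKcv hq z hqz
          have h2 := hle (z : E) hze
          rw [MgaugeE_Iinf hg.2.2 (extremePoints_subset hze)] at h2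
          have h3 := (le_mul_Iinf_iff (hg.2.2 _) _).mp h2
          have hzz : (⟨(z : E), extremePoints_subset hze⟩ : K) = z := Subtype.ext rfl
          rw [hzz] at h3
          exact h3.trans (hgq z)
    · intro hii g hg
      refine ⟨fun q hq hgq => hgq, ?_⟩
      intro h hh hq
      refine (hii g hg).2 h hh ?_
      intro ψ hψ
      have hco := coext_mul_Iinf (K := K) hψ (hg.2.2 ⟨ψ, extremePoints_subset hψ⟩)
      have hgq : g ≤ fun x => g ⟨ψ, extremePoints_subset hψ⟩
          * Iinf K ψ (extremePoints_subset hψ) x :=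
        (le_mul_Iinf_iff (hg.2.2 _) (extremePoints_subset hψ)).mpr le_rfl
      have hres := hq _ hco hgq
      rw [MgaugeE_Iinf hg.2.2 (extremePoints_subset hψ)]
      exact hres
  · -- (ii) ↔ (iii)
    constructor
    · intro hii g g' hg hg'
      constructor
      · intro hM
        refine (hii g' hg').2 g hg ?_
        intro ψ hψ
        have h1 := hM ψ hψ
        rw [MgaugeE_Iinf hg.2.2 (extremePoints_subset hψ),
          MgaugeE_Iinf hg'.2.2 (extremePoints_subset hψ)] at h1
        rw [MgaugeE_Iinf hg'.2.2 (extremePoints_subset hψ)]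
        exact (le_mul_Iinf_iff (hg'.2.2 _) _).mpr h1
      · intro hle ψ hψ
        rw [MgaugeE_Iinf hg.2.2 (extremePoints_subset hψ),
          MgaugeE_Iinf hg'.2.2 (extremePoints_subset hψ)]
        exact hle _
    · intro hiii g hg
      constructor
      · intro ψ hψ
        rw [MgaugeE_Iinf hg.2.2 (extremePoints_subset hψ)]
        exact (le_mul_Iinf_iff (hg.2.2 _) _).mpr le_rfl
      · intro h hh hle
        refine (hiii h g hh hg).mp ?_
        intro ψ hψ
        rw [MgaugeE_Iinf hh.2.2 (extremePoints_subset hψ),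
          MgaugeE_Iinf hg.2.2 (extremePoints_subset hψ)]
        have h2 := hle ψ hψ
        rw [MgaugeE_Iinf hg.2.2 (extremePoints_subset hψ)] at h2
        exact (le_mul_Iinf_iff (hg.2.2 _) _).mp h2
end
end

section
/- Let K be a nonempty compact convex set. Then A_lsc(K) is strongly co-atomic: for every g ∈ A_lsc(K), g is the greatest lower bound in A_lsc(K) of the set S = {q ∈ A_lsc(K) : q is a co-extremal vector of A_lsc(K) and g ≤ q pointwise}; that is, g ≤ q for every q ∈ S, and every h ∈ A_lsc(K) with h ≤ q for all q ∈ S satisfies h ≤ g. -/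
open Set
open scoped ENNReal Classical

noncomputable section

/-- An lsc `ℝ≥0∞`-valued function on a compact space attains its minimum. -/
lemma lsc_exists_min {α : Type*} [TopologicalSpace α] [CompactSpace α] [Nonempty α]
    {ψ : α → ℝ≥0∞} (hψ : LowerSemicontinuous ψ) : ∃ z, ∀ x, ψ z ≤ ψ x := by
  set m := ⨅ x, ψ x with hm
  rcases eq_or_ne m ⊤ with hT | hT
  · obtain ⟨z⟩ := ‹Nonempty α›
    refine ⟨z, fun x => ?_⟩
    have hx : m ≤ ψ x := iInf_le _ _
    rw [hT] at hx
    simp [top_le_iff.1 hx]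
  · have hne : Nonempty {c : ℝ≥0∞ // m < c} := ⟨⟨⊤, hT.lt_top⟩⟩
    have h1 : ∀ c : {c : ℝ≥0∞ // m < c}, ({x | ψ x ≤ c.1}).Nonempty := by
      intro c
      obtain ⟨x, hx⟩ := iInf_lt_iff.1 c.2
      exact ⟨x, hx.le⟩
    have h2 : ∀ c : {c : ℝ≥0∞ // m < c}, IsClosed {x | ψ x ≤ c.1} :=
      fun c => hψ.isClosed_preimage c.1
    have h3 : ∀ c : {c : ℝ≥0∞ // m < c}, IsCompact {x | ψ x ≤ c.1} :=
      fun c => (h2 c).isCompact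
    have hdir : Directed (· ⊇ ·) (fun c : {c : ℝ≥0∞ // m < c} => {x | ψ x ≤ c.1}) := by
      intro c d
      refine ⟨⟨min c.1 d.1, lt_min c.2 d.2⟩, ?_, ?_⟩
      · intro x hx
        exact le_trans (show ψ x ≤ min c.1 d.1 from hx) (min_le_left _ _)
      · intro x hx
        exact le_trans (show ψ x ≤ min c.1 d.1 from hx) (min_le_right _ _)
    obtain ⟨z, hz⟩ := IsCompact.nonempty_iInter_of_directed_nonempty_isCompact_isClosed
      _ hdir h1 h3 h2
    refine ⟨z, fun x => ?_⟩
    have hzm : ψ z ≤ m := by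
      refine le_of_forall_gt_imp_ge_of_dense fun c hc => ?_
      exact mem_iInter.1 hz ⟨c, hc⟩
    exact hzm.trans (iInf_le _ _)

lemma isAffine_add {E : Type*} [AddCommGroup E] [Module ℝ E] {K : Set E}
    {f g : K → ℝ≥0∞} (hf : IsAffineOnE K f) (hg : IsAffineOnE K g) :
    IsAffineOnE K (fun x => f x + g x) := by
  intro x y t ht0 ht1 hmem
  simp only [hf x y t ht0 ht1 hmem, hg x y t ht0 ht1 hmem]
  ring

lemma isAffine_ofReal_affine {E : Type*} [AddCommGroup E] [Module ℝ E]
    [TopologicalSpace E] {K : Set E}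
    (ℓ : E →L[ℝ] ℝ) (r : ℝ) (hnn : ∀ x : K, 0 ≤ ℓ x + r) :
    IsAffineOnE K (fun x : K => ENNReal.ofReal (ℓ x + r)) := by
  intro x y t ht0 ht1 hmem
  have h1t : (0:ℝ) ≤ 1 - t := by linarith
  have key : ℓ (t • (x : E) + (1 - t) • (y : E)) + r
      = t * (ℓ x + r) + (1 - t) * (ℓ y + r) := by
    simp only [map_add, map_smul, smul_eq_mul]
    ring
  simp only [key]
  rw [ENNReal.ofReal_add (mul_nonneg ht0 (hnn x)) (mul_nonneg h1t (hnn y)),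
    ENNReal.ofReal_mul ht0, ENNReal.ofReal_mul h1t]


section IfFun
variable {E : Type*} [AddCommGroup E] [Module ℝ E] [TopologicalSpace E] [T1Space E]
  {K : Set E} {e : E}

lemma lsc_ifFun (A : ℝ≥0∞) :
    LowerSemicontinuous (fun x : K => if (x : E) = e then A else ⊤) := by
  rw [lowerSemicontinuous_iff_isClosed_preimage]
  intro y
  rcases eq_or_ne y ⊤ with rfl | hy
  · convert isClosed_univ
    ext x; simp
  · by_cases hA : A ≤ y
    · have : (fun x : K => if (x : E) = e then A else ⊤) ⁻¹' Iic y
          = (Subtype.val : K → E) ⁻¹' {e} := by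
        ext x
        by_cases hx : (x : E) = e <;> simp [hx, hA, hy]
      rw [this]
      exact (isClosed_singleton).preimage continuous_subtype_val
    · have : (fun x : K => if (x : E) = e then A else ⊤) ⁻¹' Iic y = ∅ := by
        ext x
        by_cases hx : (x : E) = e <;> simp [hx, hA, hy]
      rw [this]; exact isClosed_empty
end IfFun

section IfAff
variable {E : Type*} [AddCommGroup E] [Module ℝ E] [TopologicalSpace E]
  {K : Set E} {e : E}

lemma affine_ifFun (he : e ∈ K.extremePoints ℝ) (A : ℝ≥0∞) :
    IsAffineOnE K (fun x : K => if (x : E) = e then A else ⊤) := by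
  intro x y t ht0 ht1 hmem
  rcases eq_or_lt_of_le ht0 with rfl | htpos
  · have hv : (0:ℝ) • (x : E) + (1 - 0) • (y : E) = (y : E) := by
      simp
    have hsub : (⟨(0:ℝ) • (x : E) + (1 - 0) • (y : E), hmem⟩ : K) = y :=
      Subtype.ext (by simpa using hv)
    rw [hsub]
    simp
  rcases eq_or_lt_of_le ht1 with rfl | htlt
  · have hv : (1:ℝ) • (x : E) + (1 - 1) • (y : E) = (x : E) := by simp
    have hsub : (⟨(1:ℝ) • (x : E) + (1 - 1) • (y : E), hmem⟩ : K) = x :=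
      Subtype.ext (by simpa using hv)
    rw [hsub]
    simp
  -- now 0 < t < 1
  have h1t : (0:ℝ) < 1 - t := by linarith
  by_cases hc : t • (x : E) + (1 - t) • (y : E) = e
  · have hseg : e ∈ openSegment ℝ (x : E) (y : E) :=
      ⟨t, 1 - t, htpos, h1t, by ring, hc⟩
    obtain ⟨hx, hy⟩ := (mem_extremePoints.1 he).2 _ x.2 _ y.2 hseg
    simp only [hc, hx, hy, if_pos rfl]
    rw [← add_mul, ← ENNReal.ofReal_add ht0 h1t.le]
    norm_num
  · by_cases hx : (x : E) = e
    · have hy : (y : E) ≠ e := by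
        intro hy
        apply hc
        rw [hx, hy, ← add_smul]
        norm_num
      have h2 : ENNReal.ofReal (1 - t) * ⊤ = ⊤ :=
        ENNReal.mul_top (by simp [ENNReal.ofReal_eq_zero]; linarith)
      simp only [if_neg hc, if_neg hy, h2, add_top]
    · have h2 : ENNReal.ofReal t * ⊤ = ⊤ :=
        ENNReal.mul_top (by simp [ENNReal.ofReal_eq_zero]; linarith)
      simp only [if_neg hc, if_neg hx, h2, top_add]
end IfAff

section Q
variable {E : Type*} [AddCommGroup E] [Module ℝ E] [TopologicalSpace E] [T1Space E]
  {K : Set E}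

lemma coextremal_ifFun {e : E} (he : e ∈ K.extremePoints ℝ) {c : ℝ≥0∞}
    (hc0 : c ≠ 0) (hcT : c ≠ ⊤) :
    CoExtremalLsc K (fun x : K => if (x : E) = e then c else ⊤) := by
  set q : K → ℝ≥0∞ := fun x : K => if (x : E) = e then c else ⊤ with hqdef
  have hqmem : MemAlsc K q := by
    refine ⟨lsc_ifFun c, affine_ifFun he c, fun x => ?_⟩
    by_cases hx : (x : E) = e <;> simp [hqdef, hx, pos_iff_ne_zero, hc0]
  refine ⟨hqmem, ?_⟩
  have heK : e ∈ K := (mem_extremePoints.1 he).1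
  ext f
  simp only [mem_setOf_eq]
  constructor
  · rintro ⟨hf, hqf⟩
    refine ⟨f ⟨e, heK⟩ / c, ?_, ?_⟩
    · rw [ENNReal.le_div_iff_mul_le (Or.inl hc0) (Or.inl hcT), one_mul]
      have := hqf ⟨e, heK⟩
      simpa [hqdef] using this
    · funext x
      by_cases hx : (x : E) = e
      · have hxe : x = ⟨e, heK⟩ := Subtype.ext hx
        simp only [hqdef, hx, if_pos rfl, hxe]
        rw [ENNReal.div_mul_cancel hc0 hcT]
      · have hfx : f x = ⊤ := by
          have := hqf x
          simp only [hqdef, hx, if_neg hx] at this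
          exact top_le_iff.1 this
        have ht0 : f ⟨e, heK⟩ / c ≠ 0 := by
          have h1 : c ≤ f ⟨e, heK⟩ := by
            have := hqf ⟨e, heK⟩; simpa [hqdef] using this
          intro h0
          rw [ENNReal.div_eq_zero_iff] at h0
          rcases h0 with h0 | h0
          · exact hc0 (le_antisymm (h0 ▸ h1) zero_le)
          · exact hcT h0
        simp only [hqdef, if_neg hx, hfx]
        rw [ENNReal.mul_top ht0]
  · rintro ⟨t, ht, rfl⟩
    have ht0 : t ≠ 0 := fun h => by simp [h] at ht
    have hfun : (fun x => t * q x) = fun x : K => if (x : E) = e then t * c else ⊤ := by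
      funext x
      by_cases hx : (x : E) = e <;> simp [hqdef, hx, ENNReal.mul_top ht0]
    constructor
    · rw [hfun]
      refine ⟨lsc_ifFun _, affine_ifFun he _, fun x => ?_⟩
      by_cases hx : (x : E) = e <;>
        simp [hx, pos_iff_ne_zero, mul_ne_zero ht0 hc0]
    · intro x
      exact le_mul_of_one_le_left zero_le ht
end Q


section Main
variable {E : Type*}
  [AddCommGroup E] [Module ℝ E] [TopologicalSpace E] [IsTopologicalAddGroup E]
  [ContinuousSMul ℝ E] [T2Space E] [LocallyConvexSpace ℝ E]
  {K : Set E}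

/-- Separation: a continuous affine minorant of an lsc affine positive function, large at a
given point. -/
lemma exists_affine_minorant (hKcp : IsCompact K) (hKcv : Convex ℝ K)
    {h : K → ℝ≥0∞} (hlsc : LowerSemicontinuous h) (haff : IsAffineOnE K h)
    (hpos : ∀ x : K, 0 < h x) (x0 : K) (c : ℝ) (hc : ENNReal.ofReal c < h x0) :
    ∃ (ℓ : E →L[ℝ] ℝ) (r : ℝ),
      (∀ x : K, ENNReal.ofReal (ℓ x + r) ≤ h x) ∧ c < ℓ x0 + r := by
  by_cases hfin : ∃ x : K, h x ≠ ⊤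
  swap
  · push_neg at hfin
    refine ⟨0, c + 1, fun x => ?_, by simp⟩
    rw [hfin x]; exact le_top
  -- the epigraph
  set epi : Set (E × ℝ) := {p | ∃ hp : p.1 ∈ K, h ⟨p.1, hp⟩ ≤ ENNReal.ofReal p.2} with hepi
  -- second coordinates in epi are nonnegative
  have epi_up : ∀ p ∈ epi, ∀ s : ℝ, p.2 ≤ s → (p.1, s) ∈ epi := by
    rintro p ⟨hp, hle⟩ s hs
    exact ⟨hp, hle.trans (ENNReal.ofReal_le_ofReal hs)⟩
  have hconv : Convex ℝ epi := by
    rintro p ⟨hpK, hple⟩ q ⟨hqK, hqle⟩ a b ha hb hab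
    have hb' : b = 1 - a := by linarith
    subst hb'
    have hmem : a • p.1 + (1 - a) • q.1 ∈ K := hKcv hpK hqK ha hb hab
    refine ⟨hmem, ?_⟩
    have ha1 : a ≤ 1 := by linarith
    have hP : 0 ≤ p.2 := by
      have := (hpos ⟨p.1, hpK⟩).trans_le hple
      exact le_of_lt (ENNReal.ofReal_pos.1 this)
    have hQ : 0 ≤ q.2 := by
      have := (hpos ⟨q.1, hqK⟩).trans_le hqle
      exact le_of_lt (ENNReal.ofReal_pos.1 this)
    have key := haff ⟨p.1, hpK⟩ ⟨q.1, hqK⟩ a ha ha1 hmem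
    calc h ⟨(a • p + (1 - a) • q).1, hmem⟩
        = ENNReal.ofReal a * h ⟨p.1, hpK⟩ + ENNReal.ofReal (1 - a) * h ⟨q.1, hqK⟩ := key
      _ ≤ ENNReal.ofReal a * ENNReal.ofReal p.2
            + ENNReal.ofReal (1 - a) * ENNReal.ofReal q.2 := by
          gcongr
      _ = ENNReal.ofReal (a * p.2 + (1 - a) * q.2) := by
          rw [ENNReal.ofReal_add (mul_nonneg ha hP) (mul_nonneg hb hQ),
            ENNReal.ofReal_mul ha, ENNReal.ofReal_mul hb]
      _ = ENNReal.ofReal ((a • p + (1 - a) • q).2) := by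
          simp [Prod.smul_snd, smul_eq_mul]
  have hclosed : IsClosed epi := by
    rw [← isOpen_compl_iff, isOpen_iff_mem_nhds]
    intro p hp
    by_cases hpK : p.1 ∈ K
    · have hlt : ENNReal.ofReal p.2 < h ⟨p.1, hpK⟩ := by
        by_contra hle
        exact hp ⟨hpK, le_of_not_gt hle⟩
      obtain ⟨b, hb1, hb2⟩ := exists_between hlt
      have hbT : b ≠ ⊤ := (hb2.trans_le le_top).ne
      have hev : ∀ᶠ z : K in nhds ⟨p.1, hpK⟩, b < h z := hlsc ⟨p.1, hpK⟩ b hb2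
      rw [nhds_subtype_eq_comap] at hev
      obtain ⟨t, htm, hts⟩ := Filter.mem_comap.1 hev
      obtain ⟨W, hWt, hWo, hWp⟩ := mem_nhds_iff.1 htm
      refine Filter.mem_of_superset
        (IsOpen.mem_nhds (hWo.prod (isOpen_Iio (a := b.toReal))) ⟨hWp, ?_⟩) ?_
      · -- p.2 < b.toReal
        show p.2 ∈ Iio b.toReal
        by_contra hge
        have : b ≤ ENNReal.ofReal p.2 := by
          rw [← ENNReal.ofReal_toReal hbT]
          exact ENNReal.ofReal_le_ofReal (le_of_not_gt hge)
        exact absurd (this.trans_lt hb1) (lt_irrefl _)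
      · rintro ⟨z, s⟩ ⟨hzW, hs⟩ ⟨hzK, hzle⟩
        have hbz : b < h ⟨z, hzK⟩ := hts (hWt hzW)
        have : h ⟨z, hzK⟩ ≤ b := by
          refine hzle.trans ?_
          rw [← ENNReal.ofReal_toReal hbT]
          exact ENNReal.ofReal_le_ofReal (le_of_lt hs)
        exact absurd (hbz.trans_le this) (lt_irrefl _)
    · refine Filter.mem_of_superset
        (IsOpen.mem_nhds (hKcp.isClosed.isOpen_compl.prod isOpen_univ) ⟨hpK, trivial⟩) ?_
      rintro ⟨z, s⟩ ⟨hz, -⟩ ⟨hzK, -⟩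
      exact hz hzK
  have hx0 : ((x0 : E), c) ∉ epi := by
    rintro ⟨hx, hle⟩
    have : (⟨(x0 : E), hx⟩ : K) = x0 := Subtype.ext rfl
    rw [this] at hle
    exact absurd (hc.trans_le hle) (lt_irrefl _)
  obtain ⟨L, u, hLepi, hLx⟩ := geometric_hahn_banach_closed_point hconv hclosed hx0
  set ℓ : E →L[ℝ] ℝ := L.comp (ContinuousLinearMap.inl ℝ E ℝ) with hℓ
  set α : ℝ := L (0, 1) with hα
  have hLdecomp : ∀ (z : E) (s : ℝ), L (z, s) = ℓ z + s * α := by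
    intro z s
    have : (z, s) = (z, (0:ℝ)) + s • ((0:E), (1:ℝ)) := by
      simp [Prod.ext_iff]
    rw [this, map_add, map_smul]
    simp [hℓ, hα, smul_eq_mul]
  have key : ∀ (z : E) (s : ℝ), (z, s) ∈ epi → ℓ z + s * α < u := by
    intro z s hzs
    have := hLepi _ hzs
    rwa [hLdecomp] at this
  have hux0 : u < ℓ x0 + c * α := by
    have := hLx
    rwa [hLdecomp] at this
  obtain ⟨x1, hx1⟩ := hfin
  set r1 : ℝ := (h x1).toReal with hr1
  have hmem1 : ((x1 : E), r1) ∈ epi := by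
    refine ⟨x1.2, ?_⟩
    have : (⟨(x1 : E), x1.2⟩ : K) = x1 := Subtype.ext rfl
    rw [this, hr1, ENNReal.ofReal_toReal hx1]
  have hαle : α ≤ 0 := by
    by_contra hαpos
    push_neg at hαpos
    obtain ⟨n, hn⟩ := exists_nat_ge ((u - ℓ x1 - r1 * α) / α)
    have hmem2 : ((x1 : E), r1 + n) ∈ epi :=
      epi_up _ hmem1 _ (le_add_of_nonneg_right n.cast_nonneg)
    have hklt := key _ _ hmem2
    have : (u - ℓ x1 - r1 * α) ≤ n * α := by
      rw [div_le_iff₀ hαpos] at hn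
      linarith
    nlinarith
  rcases hαle.lt_or_eq with hαneg | hα0
  · -- α < 0
    refine ⟨(-α⁻¹) • ℓ, u / α, fun x => ?_, ?_⟩
    · by_cases hhx : h x = ⊤
      · rw [hhx]; exact le_top
      · have hmemx : ((x : E), (h x).toReal) ∈ epi := by
          refine ⟨x.2, ?_⟩
          have : (⟨(x : E), x.2⟩ : K) = x := Subtype.ext rfl
          rw [this, ENNReal.ofReal_toReal hhx]
        have hkey := key _ _ hmemx
        have heq : ((-α⁻¹) • ℓ) x + u / α = (u - ℓ x) / α := by
          simp only [ContinuousLinearMap.smul_apply, smul_eq_mul]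
          field_simp
          ring
        rw [heq]
        have hlt : (u - ℓ x) / α < (h x).toReal := by
          rw [div_lt_iff_of_neg hαneg]
          linarith
        calc ENNReal.ofReal ((u - ℓ x) / α) ≤ ENNReal.ofReal (h x).toReal :=
              ENNReal.ofReal_le_ofReal hlt.le
          _ = h x := ENNReal.ofReal_toReal hhx
    · have heq : ((-α⁻¹) • ℓ) x0 + u / α = (u - ℓ x0) / α := by
        simp only [ContinuousLinearMap.smul_apply, smul_eq_mul]
        field_simp
        ring
      rw [heq, lt_div_iff_of_neg hαneg]
      linarith
  · -- α = 0
    have hux0' : u < ℓ x0 := by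
      rw [hα0, mul_zero, add_zero] at hux0
      exact hux0
    set t : ℝ := (|c| + 1) / (ℓ x0 - u) with ht
    have hden : (0:ℝ) < ℓ x0 - u := by linarith
    have htpos : 0 < t := div_pos (by positivity) hden
    refine ⟨t • ℓ, -(t * u), fun x => ?_, ?_⟩
    · by_cases hhx : h x = ⊤
      · rw [hhx]; exact le_top
      · have hmemx : ((x : E), (h x).toReal) ∈ epi := by
          refine ⟨x.2, ?_⟩
          have : (⟨(x : E), x.2⟩ : K) = x := Subtype.ext rfl
          rw [this, ENNReal.ofReal_toReal hhx]
        have hkey := key _ _ hmemx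
        rw [hα0, mul_zero, add_zero] at hkey
        have hneg : (t • ℓ) x + -(t * u) ≤ 0 := by
          simp only [ContinuousLinearMap.smul_apply, smul_eq_mul]
          nlinarith
        rw [ENNReal.ofReal_eq_zero.2 hneg]
        exact zero_le
    · have : (t • ℓ) x0 + -(t * u) = t * (ℓ x0 - u) := by
        simp only [ContinuousLinearMap.smul_apply, smul_eq_mul]; ring
      rw [this, ht, div_mul_cancel₀ _ hden.ne']
      have : c ≤ |c| := le_abs_self c
      linarith


/-- Bauer-type minimum principle: if a continuous affine function is dominated by the lsc
affine function `g` at every extreme point of `K`, then it is dominated everywhere. -/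
lemma affine_le_of_extreme (hKne : K.Nonempty) (hKcp : IsCompact K) (hKcv : Convex ℝ K)
    {g : K → ℝ≥0∞} (hglsc : LowerSemicontinuous g) (hgaff : IsAffineOnE K g)
    (ℓ : E →L[ℝ] ℝ) (r : ℝ)
    (hext : ∀ e (he : e ∈ K.extremePoints ℝ),
      ENNReal.ofReal (ℓ e + r) ≤ g ⟨e, he.1⟩) :
    ∀ x : K, ENNReal.ofReal (ℓ x + r) ≤ g x := by
  haveI : Nonempty K := hKne.to_subtype
  haveI : CompactSpace K := isCompact_iff_compactSpace.1 hKcp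
  set a : E → ℝ := fun z => ℓ z + r with ha
  have hacont : Continuous a := (ℓ.continuous).add continuous_const
  obtain ⟨z0, hz0K, hz0max⟩ := hKcp.exists_isMaxOn hKne hacont.continuousOn
  set B : ℝ := a z0 with hB
  have hBmax : ∀ x ∈ K, a x ≤ B := hz0max
  set ψ : K → ℝ≥0∞ := fun z => g z + ENNReal.ofReal (B - a (z : E)) with hψ
  have hψlsc : LowerSemicontinuous ψ := by
    apply LowerSemicontinuous.add hglsc
    exact (ENNReal.continuous_ofReal.comp
      ((continuous_const.sub (hacont.comp continuous_subtype_val)))).lowerSemicontinuous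
  have hψaff : IsAffineOnE K ψ := by
    have h2 : IsAffineOnE K (fun z : K => ENNReal.ofReal ((-ℓ) (z : E) + (B - r))) := by
      apply isAffine_ofReal_affine (-ℓ) (B - r)
      intro x
      have := hBmax x x.2
      simp only [ContinuousLinearMap.neg_apply]
      simp only [ha] at this
      linarith
    have heq : ψ = fun z : K => g z + ENNReal.ofReal ((-ℓ) (z : E) + (B - r)) := by
      funext z
      simp only [hψ, ha, ContinuousLinearMap.neg_apply]
      ring_nf
    rw [heq]
    exact isAffine_add hgaff h2
  obtain ⟨z, hz⟩ := lsc_exists_min hψlsc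
  set m : ℝ≥0∞ := ψ z with hm
  -- the minimum set, as a subset of E
  set S : Set K := {w : K | ψ w ≤ m} with hS
  set F : Set E := Subtype.val '' S with hF
  have hFK : F ⊆ K := by rintro x ⟨w, _, rfl⟩; exact w.2
  have hFne : F.Nonempty := ⟨z, z, show ψ z ≤ m from le_of_eq rfl, rfl⟩
  have hFcp : IsCompact F := by
    have : IsClosed S := hψlsc.isClosed_preimage m
    exact this.isCompact.image continuous_subtype_val
  have hmemF : ∀ (x : E) (hx : x ∈ K), ψ ⟨x, hx⟩ ≤ m → x ∈ F :=
    fun x hx hψx => ⟨⟨x, hx⟩, hψx, rfl⟩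
  have hFmem : ∀ x ∈ F, ∃ hx : x ∈ K, ψ ⟨x, hx⟩ ≤ m := by
    rintro x ⟨w, hw, rfl⟩
    exact ⟨w.2, by exact hw⟩
  -- F is an extreme subset of K
  have hFext : IsExtreme ℝ K F := by
    refine ⟨hFK, ?_⟩
    rintro x1 h1 x2 h2 x hxF ⟨aa, bb, haa, hbb, hab, hcombo⟩
    obtain ⟨hxK, hψx⟩ := hFmem x hxF
    have hbb' : bb = 1 - aa := by linarith
    subst hbb'
    have hmemc : aa • x1 + (1 - aa) • x2 ∈ K := by rw [hcombo]; exact hxK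
    have hkey := hψaff ⟨x1, h1⟩ ⟨x2, h2⟩ aa haa.le (by linarith) hmemc
    have hcombo' : (⟨aa • x1 + (1 - aa) • x2, hmemc⟩ : K) = ⟨x, hxK⟩ :=
      Subtype.ext (by simpa using hcombo)
    rw [hcombo'] at hkey
    set ψ1 := ψ ⟨x1, h1⟩
    set ψ2 := ψ ⟨x2, h2⟩
    have hm1 : m ≤ ψ1 := hz _
    have hm2 : m ≤ ψ2 := hz _
    have hcoef : ENNReal.ofReal aa + ENNReal.ofReal (1 - aa) = 1 := by
      rw [← ENNReal.ofReal_add haa.le (by linarith)]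
      norm_num
    have hmsplit : m = ENNReal.ofReal aa * m + ENNReal.ofReal (1 - aa) * m := by
      rw [← add_mul, hcoef, one_mul]
    have haa0 : ENNReal.ofReal aa ≠ 0 := by
      simp [ENNReal.ofReal_eq_zero]; linarith
    have hbb0 : ENNReal.ofReal (1 - aa) ≠ 0 := by
      simp [ENNReal.ofReal_eq_zero]; linarith
    have hsum : ENNReal.ofReal aa * ψ1 + ENNReal.ofReal (1 - aa) * ψ2 ≤ m := by
      rw [← hkey]; exact hψx
    rcases eq_or_ne m ⊤ with hmT | hmT
    · exact hmemF _ h1 (hmT ▸ le_top)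
    · have hψ1 : ψ1 ≤ m := by
        by_contra hgt
        push_neg at hgt
        have hstrict : ENNReal.ofReal aa * m < ENNReal.ofReal aa * ψ1 :=
          (ENNReal.mul_lt_mul_iff_right haa0 ENNReal.ofReal_ne_top).2 hgt
        have h2ne : ENNReal.ofReal (1 - aa) * m ≠ ⊤ :=
          ENNReal.mul_ne_top ENNReal.ofReal_ne_top hmT
        have : m < ENNReal.ofReal aa * ψ1 + ENNReal.ofReal (1 - aa) * ψ2 := by
          calc m = ENNReal.ofReal aa * m + ENNReal.ofReal (1 - aa) * m := hmsplit
            _ < ENNReal.ofReal aa * ψ1 + ENNReal.ofReal (1 - aa) * m :=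
              ENNReal.add_lt_add_right h2ne hstrict
            _ ≤ ENNReal.ofReal aa * ψ1 + ENNReal.ofReal (1 - aa) * ψ2 := by gcongr
        exact absurd (this.trans_le hsum) (lt_irrefl _)
      have hψ2 : ψ2 ≤ m := by
        by_contra hgt
        push_neg at hgt
        have hstrict : ENNReal.ofReal (1 - aa) * m < ENNReal.ofReal (1 - aa) * ψ2 :=
          (ENNReal.mul_lt_mul_iff_right hbb0 ENNReal.ofReal_ne_top).2 hgt
        have h1ne : ENNReal.ofReal aa * m ≠ ⊤ :=
          ENNReal.mul_ne_top ENNReal.ofReal_ne_top hmT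
        have : m < ENNReal.ofReal aa * ψ1 + ENNReal.ofReal (1 - aa) * ψ2 := by
          calc m = ENNReal.ofReal aa * m + ENNReal.ofReal (1 - aa) * m := hmsplit
            _ < ENNReal.ofReal aa * m + ENNReal.ofReal (1 - aa) * ψ2 :=
              ENNReal.add_lt_add_left h1ne hstrict
            _ ≤ ENNReal.ofReal aa * ψ1 + ENNReal.ofReal (1 - aa) * ψ2 := by gcongr
        exact absurd (this.trans_le hsum) (lt_irrefl _)
      exact hmemF _ h1 hψ1
  -- extreme point of F
  obtain ⟨e, heF⟩ := hFcp.extremePoints_nonempty hFne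
  have heK : e ∈ K.extremePoints ℝ := hFext.extremePoints_subset_extremePoints heF
  obtain ⟨heK', hψe⟩ := hFmem e (extremePoints_subset heF)
  -- ofReal B ≤ m
  have hBm : ENNReal.ofReal B ≤ m := by
    have h1 : ENNReal.ofReal B ≤ ENNReal.ofReal (a e) + ENNReal.ofReal (B - a e) := by
      have : B = a e + (B - a e) := by ring
      calc ENNReal.ofReal B = ENNReal.ofReal (a e + (B - a e)) := by rw [← this]
        _ ≤ _ := ENNReal.ofReal_add_le
    have h2 : ENNReal.ofReal (a e) ≤ g ⟨e, heK'⟩ := hext e heK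
    calc ENNReal.ofReal B ≤ ENNReal.ofReal (a e) + ENNReal.ofReal (B - a e) := h1
      _ ≤ g ⟨e, heK'⟩ + ENNReal.ofReal (B - a e) := by gcongr
      _ = ψ ⟨e, heK'⟩ := rfl
      _ ≤ m := hψe
  -- conclude
  intro x
  by_cases hax : a (x : E) ≤ 0
  · rw [show ℓ (x : E) + r = a (x : E) from rfl, ENNReal.ofReal_eq_zero.2 hax]
    exact zero_le
  · push_neg at hax
    have hBx : ENNReal.ofReal B ≤ ψ x := hBm.trans (hz x)
    have hsplit : ENNReal.ofReal B
        = ENNReal.ofReal (a (x : E)) + ENNReal.ofReal (B - a (x : E)) := by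
      rw [← ENNReal.ofReal_add hax.le (sub_nonneg.2 (hBmax x x.2))]
      ring_nf
    rw [hsplit] at hBx
    have := (ENNReal.add_le_add_iff_right (c := g x)
      (a := ENNReal.ofReal (B - a (x : E))) ENNReal.ofReal_ne_top).1 hBx
    exact this

end Main

theorem statement16
    {E : Type*}
    [AddCommGroup E] [Module ℝ E] [TopologicalSpace E] [IsTopologicalAddGroup E]
    [ContinuousSMul ℝ E] [T2Space E] [LocallyConvexSpace ℝ E]
    (K : Set E) (hKne : K.Nonempty) (hKcp : IsCompact K) (hKcv : Convex ℝ K)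
    (g : K → ℝ≥0∞) (hg : MemAlsc K g) :
    (∀ q : K → ℝ≥0∞, CoExtremalLsc K q → g ≤ q → g ≤ q) ∧
    ∀ h : K → ℝ≥0∞, MemAlsc K h →
      (∀ q : K → ℝ≥0∞, CoExtremalLsc K q → g ≤ q → h ≤ q) → h ≤ g := by
  constructor
  · intro q _ hgq
    exact hgq
  · intro h hh hyp
    obtain ⟨hhlsc, hhaff, hhpos⟩ := hh
    obtain ⟨hglsc, hgaff, hgpos⟩ := hg
    have hext : ∀ e (he : e ∈ K.extremePoints ℝ), h ⟨e, he.1⟩ ≤ g ⟨e, he.1⟩ := by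
      intro e he
      rcases eq_or_ne (g ⟨e, he.1⟩) ⊤ with hT | hT
      · rw [hT]; exact le_top
      · set c := g ⟨e, he.1⟩ with hcdef
        have hc0 : c ≠ 0 := (hgpos _).ne'
        have hq := coextremal_ifFun he hc0 hT
        have hgq : g ≤ fun x : K => if (x : E) = e then c else ⊤ := by
          intro x
          by_cases hx : (x : E) = e
          · have hxe : x = ⟨e, he.1⟩ := Subtype.ext hx
            rw [hxe]
            simp [hcdef]
          · simp [hx]
        have hhq := hyp _ hq hgq
        have := hhq ⟨e, he.1⟩
        simpa using this
    intro x
    apply ENNReal.le_of_forall_nnreal_lt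
    intro ρ hρ
    have hρ' : ENNReal.ofReal (ρ : ℝ) < h x := by rwa [ENNReal.ofReal_coe_nnreal]
    obtain ⟨ℓ, r, hbound, hpt⟩ :=
      exists_affine_minorant hKcp hKcv hhlsc hhaff hhpos x ρ hρ'
    have hextg : ∀ e (he : e ∈ K.extremePoints ℝ),
        ENNReal.ofReal (ℓ e + r) ≤ g ⟨e, he.1⟩ :=
      fun e he => (hbound ⟨e, he.1⟩).trans (hext e he)
    have hfin := affine_le_of_extreme hKne hKcp hKcv hglsc hgaff ℓ r hextg x
    calc (↑ρ : ℝ≥0∞) = ENNReal.ofReal (ρ : ℝ) := (ENNReal.ofReal_coe_nnreal).symm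
      _ ≤ ENNReal.ofReal (ℓ x + r) := ENNReal.ofReal_le_ofReal hpt.le
      _ ≤ g x := hfin
end
end
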